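/- arXiv:1406.2094 — 4 statements merged into one kernel-verified Lean document; each statement's English description precedes it below -/
import Mathlib

section
/- Let X be a compact Hausdorff space, Y ⊆ X a closed subset, and let p : A → B be a surjective continuous homomorphism of Banach algebras. Then the induced continuous homomorphism C(X,Y;A) → C(X,Y;B), f ↦ p∘f, is surjective. -/
open Set Filter Topology

/-- Approximate lifting with control: given a controlled pointwise lifting property for `p`,
any `g ∈ C(X,Y;B)` admits `f ∈ C(X,Y;A)` with `‖f x‖ ≤ C‖g‖` and `‖p (f x) - g x‖ ≤ ε`. -/
lemma approx_lift
    (X : Type) [TopologicalSpace X] [CompactSpace X] [T2Space X]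
    (Y : Set X) (hY : IsClosed Y)
    (A B : Type)
    [NonUnitalNormedRing A] [NormedSpace ℂ A]
    [NonUnitalNormedRing B] [NormedSpace ℂ B]
    (P : A →L[ℝ] B) (C : ℝ) (hC0 : 0 ≤ C)
    (hC : ∀ b : B, ∃ a : A, P a = b ∧ ‖a‖ ≤ C * ‖b‖)
    (g : C(X, B)) (hg : ∀ y ∈ Y, g y = 0) (ε : ℝ) (hε : 0 < ε) :
    ∃ f : C(X, A), (∀ y ∈ Y, f y = 0) ∧ (∀ x, ‖f x‖ ≤ C * ‖g‖) ∧
      ∀ x, ‖P (f x) - g x‖ ≤ ε := by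
  classical
  -- open cover by sets where g varies by less than ε
  set U : X → Set X := fun c => {x | ‖g x - g c‖ < ε} with hU
  have hUopen : ∀ c, IsOpen (U c) := by
    intro c
    have : Continuous fun x => ‖g x - g c‖ := (g.continuous.sub continuous_const).norm
    simpa [U] using isOpen_lt this continuous_const
  have hUcover : (univ : Set X) ⊆ ⋃ c, U c := by
    intro x _
    exact mem_iUnion.2 ⟨x, by simp [U, hε]⟩
  obtain ⟨t, ht⟩ := isCompact_univ.elim_finite_subcover U hUopen hUcover
  -- partition of unity subordinate to the finite cover
  have htcover : (univ : Set X) ⊆ ⋃ i : t, U i := by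
    intro x hx
    obtain ⟨c, hc, hxc⟩ := mem_iUnion₂.1 (ht hx)
    exact mem_iUnion.2 ⟨⟨c, hc⟩, hxc⟩
  obtain ⟨φ, hφ⟩ := PartitionOfUnity.exists_isSubordinate (s := (univ : Set X))
    isClosed_univ (fun i : t => U i) (fun i => hUopen i) htcover
  -- choose lifts of the values
  choose a ha hna using fun i : t => hC (g i)
  -- Urysohn function vanishing on Y, equal to 1 where ‖g‖ ≥ ε
  set K : Set X := {x | ε ≤ ‖g x‖} with hK
  have hKclosed : IsClosed K := by
    have : Continuous fun x => ‖g x‖ := g.continuous.norm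
    simpa [K] using isClosed_le continuous_const this
  have hdisj : Disjoint Y K := by
    rw [Set.disjoint_left]
    intro y hy hyK
    rw [mem_setOf_eq, hg y hy, norm_zero] at hyK
    linarith
  obtain ⟨ψ, hψY, hψK, hψ01⟩ := exists_continuous_zero_one_of_isClosed hY hKclosed hdisj
  -- the approximate lift
  set F : C(X, A) := ⟨fun x => ψ x • ∑ i : t, φ i x • a i, by
    refine (map_continuous ψ).smul (continuous_finset_sum _ fun i _ => ?_)
    exact ((φ i).continuous).smul continuous_const⟩ with hF
  have hφsum : ∀ x : X, ∑ i : t, φ i x = 1 := by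
    intro x
    have := φ.sum_eq_one (mem_univ x)
    simpa [finsum_eq_sum_of_fintype] using this
  have hφnonneg : ∀ (i : t) (x : X), 0 ≤ φ i x := fun i x => φ.nonneg i x
  refine ⟨F, ?_, ?_, ?_⟩
  · intro y hy
    have : ψ y = 0 := hψY hy
    simp [F, this]
  · intro x
    have h1 : ‖F x‖ ≤ ‖∑ i : t, φ i x • a i‖ := by
      have : ‖F x‖ = |ψ x| * ‖∑ i : t, φ i x • a i‖ := by
        simp [F, norm_smul]
      rw [this]
      have hψx := hψ01 x
      have : |ψ x| ≤ 1 := by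
        rw [abs_le]; constructor <;> [linarith [hψx.1]; exact hψx.2]
      nlinarith [norm_nonneg (∑ i : t, φ i x • a i)]
    refine h1.trans ?_
    calc ‖∑ i : t, φ i x • a i‖ ≤ ∑ i : t, ‖φ i x • a i‖ := norm_sum_le _ _
      _ ≤ ∑ i : t, φ i x * (C * ‖g‖) := by
          refine Finset.sum_le_sum fun i _ => ?_
          rw [norm_smul, Real.norm_eq_abs, abs_of_nonneg (hφnonneg i x)]
          exact mul_le_mul_of_nonneg_left ((hna i).trans
            (mul_le_mul_of_nonneg_left (g.norm_coe_le_norm i) hC0)) (hφnonneg i x)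
      _ = C * ‖g‖ := by rw [← Finset.sum_mul, hφsum, one_mul]
  · intro x
    have hPsum : P (∑ i : t, φ i x • a i) = ∑ i : t, φ i x • g i := by
      rw [map_sum]
      exact Finset.sum_congr rfl fun i _ => by rw [map_smul, ha i]
    have hclose : ‖(∑ i : t, φ i x • g (i : X)) - g x‖ ≤ ε := by
      have heq : (∑ i : t, φ i x • g (i : X)) - g x = ∑ i : t, φ i x • (g i - g x) := by
        simp only [smul_sub, Finset.sum_sub_distrib, ← Finset.sum_smul, hφsum x, one_smul]
      rw [heq]
      calc ‖∑ i : t, φ i x • (g i - g x)‖ ≤ ∑ i : t, ‖φ i x • (g (i : X) - g x)‖ :=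
            norm_sum_le _ _
        _ ≤ ∑ i : t, φ i x * ε := by
            refine Finset.sum_le_sum fun i _ => ?_
            rw [norm_smul, Real.norm_eq_abs, abs_of_nonneg (hφnonneg i x)]
            rcases eq_or_ne (φ i x) 0 with h0 | h0
            · simp [h0]
            · have hx : x ∈ U i := hφ i (subset_tsupport _ (by simpa using h0))
              have hx' : ‖g ↑i - g x‖ < ε := by
                have : ‖g x - g ↑i‖ < ε := hx
                rwa [norm_sub_rev] at this
              exact mul_le_mul_of_nonneg_left (le_of_lt hx') (hφnonneg i x)
        _ = ε := by rw [← Finset.sum_mul, hφsum, one_mul]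
    -- combine with the Urysohn cutoff
    have hdecomp : P (F x) - g x = ψ x • ((∑ i : t, φ i x • g (i : X)) - g x)
        + (ψ x - 1) • g x := by
      have : P (F x) = ψ x • ∑ i : t, φ i x • g (i : X) := by
        simp only [F, ContinuousMap.coe_mk, map_smul, hPsum]
      rw [this, smul_sub, sub_smul, one_smul]
      abel
    rw [hdecomp]
    have hψx := hψ01 x
    rcases le_or_gt ε ‖g x‖ with hxK | hxK
    · have h1 : ψ x = 1 := hψK hxK
      simp only [h1, one_smul, sub_self, zero_smul, add_zero]
      exact hclose
    · calc ‖ψ x • ((∑ i : t, φ i x • g (i : X)) - g x) + (ψ x - 1) • g x‖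
          ≤ ‖ψ x • ((∑ i : t, φ i x • g (i : X)) - g x)‖ + ‖(ψ x - 1) • g x‖ :=
            norm_add_le _ _
        _ ≤ ψ x * ε + (1 - ψ x) * ε := by
            gcongr ?_ + ?_
            · rw [norm_smul, Real.norm_eq_abs, abs_of_nonneg hψx.1]
              exact mul_le_mul_of_nonneg_left hclose hψx.1
            · rw [norm_smul, Real.norm_eq_abs, abs_of_nonpos (by linarith [hψx.2])]
              have : -(ψ x - 1) = 1 - ψ x := by ring
              rw [this]
              exact mul_le_mul_of_nonneg_left (le_of_lt hxK) (by linarith [hψx.2])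
        _ = ε := by ring


/-!
STATEMENT 6.  Let `X` be a compact Hausdorff space, `Y ⊆ X` a closed subset, and
`p : A → B` a surjective continuous homomorphism of Banach algebras.  Then the induced
continuous homomorphism `C(X,Y;A) → C(X,Y;B)`, `f ↦ p ∘ f`, is surjective; that is, every
continuous `B`-valued function on `X` vanishing on `Y` lifts to a continuous `A`-valued
function on `X` vanishing on `Y`.
-/
theorem surjective_postcomposition_on_vanishing_functions
    (X : Type) [TopologicalSpace X] [CompactSpace X] [T2Space X]
    (Y : Set X) (hY : IsClosed Y)
    (A B : Type)
    [NonUnitalNormedRing A] [NormedSpace ℂ A] [IsScalarTower ℂ A A] [SMulCommClass ℂ A A] [CompleteSpace A]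
    [NonUnitalNormedRing B] [NormedSpace ℂ B] [IsScalarTower ℂ B B] [SMulCommClass ℂ B B] [CompleteSpace B]
    (p : A →ₙₐ[ℂ] B) (hp : Continuous p) (hsurj : Function.Surjective p) :
    ∀ g : C(X, B), (∀ y ∈ Y, g y = 0) →
      ∃ f : C(X, A), (∀ y ∈ Y, f y = 0) ∧ ∀ x, p (f x) = g x := by
  classical
  intro g hg
  -- `p` as a continuous (real-)linear map
  set Pc : A →L[ℂ] B := ⟨{ toFun := p, map_add' := map_add p, map_smul' := map_smul p }, hp⟩
    with hPc
  set P : A →L[ℝ] B := Pc.restrictScalars ℝ with hPdef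
  have hPp : ∀ a : A, P a = p a := fun a => rfl
  have hPsurj : Function.Surjective Pc := hsurj
  obtain ⟨C, hCpos, hC'⟩ := Pc.exists_preimage_norm_le hPsurj
  have hC : ∀ b : B, ∃ a : A, P a = b ∧ ‖a‖ ≤ C * ‖b‖ := hC'
  -- post-composition map
  set pc : C(X, A) → C(X, B) := fun f => ⟨fun x => P (f x), P.continuous.comp f.continuous⟩
    with hpc
  -- the key half-step: approximate lifting within factor 1/2
  have key : ∀ g' : C(X, B), (∀ y ∈ Y, g' y = 0) →
      ∃ f : C(X, A), (∀ y ∈ Y, f y = 0) ∧ ‖f‖ ≤ C * ‖g'‖ ∧ ‖g' - pc f‖ ≤ ‖g'‖ / 2 := by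
    intro g' hg'
    rcases eq_or_lt_of_le (norm_nonneg g') with h0 | h0
    · have hg0 : g' = 0 := norm_eq_zero.1 h0.symm
      refine ⟨0, by simp, by simp [← h0], ?_⟩
      simp only [hpc, hg0]
      have : ({ toFun := fun x => P ((0 : C(X,A)) x), continuous_toFun := P.continuous.comp (0 : C(X,A)).continuous } : C(X,B)) = 0 := by
        ext x; simp
      rw [this]
      simp
    · obtain ⟨f, hf0, hfb, hfa⟩ := approx_lift X Y hY A B P C hCpos.le hC g' hg'
        (‖g'‖ / 2) (by linarith)
      refine ⟨f, hf0, ?_, ?_⟩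
      · exact (ContinuousMap.norm_le f (by positivity)).2 hfb
      · refine (ContinuousMap.norm_le _ (by positivity)).2 fun x => ?_
        simpa [hpc, norm_sub_rev] using hfa x
  -- iterate
  let step : {h : C(X, B) // ∀ y ∈ Y, h y = 0} → C(X, A) := fun h => (key h.1 h.2).choose
  have step0 : ∀ h, ∀ y ∈ Y, step h y = 0 := fun h => (key h.1 h.2).choose_spec.1
  have stepn : ∀ h, ‖step h‖ ≤ C * ‖h.1‖ := fun h => (key h.1 h.2).choose_spec.2.1
  have stepa : ∀ h, ‖h.1 - pc (step h)‖ ≤ ‖h.1‖ / 2 := fun h => (key h.1 h.2).choose_spec.2.2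
  let gs : ℕ → {h : C(X, B) // ∀ y ∈ Y, h y = 0} := fun n =>
    Nat.rec ⟨g, hg⟩ (fun _ h => ⟨h.1 - pc (step h), fun y hy => by
      simp [hpc, h.2 y hy, step0 h y hy, hPp]⟩) n
  let fs : ℕ → C(X, A) := fun n => step (gs n)
  have hgs_succ : ∀ n, (gs (n + 1)).1 = (gs n).1 - pc (fs n) := fun n => rfl
  have hgs_norm : ∀ n, ‖(gs n).1‖ ≤ ‖g‖ * (1 / 2) ^ n := by
    intro n
    induction n with
    | zero => simp [gs]
    | succ n ih =>
      calc ‖(gs (n + 1)).1‖ ≤ ‖(gs n).1‖ / 2 := stepa (gs n)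
        _ ≤ (‖g‖ * (1 / 2) ^ n) / 2 := by linarith
        _ = ‖g‖ * (1 / 2) ^ (n + 1) := by ring
  have hfs_norm : ∀ n, ‖fs n‖ ≤ C * ‖g‖ * (1 / 2) ^ n := by
    intro n
    calc ‖fs n‖ ≤ C * ‖(gs n).1‖ := stepn (gs n)
      _ ≤ C * (‖g‖ * (1 / 2) ^ n) := by
          exact mul_le_mul_of_nonneg_left (hgs_norm n) hCpos.le
      _ = C * ‖g‖ * (1 / 2) ^ n := by ring
  -- summability
  have hsummable : Summable fs := by
    apply Summable.of_norm_bounded (Summable.mul_left (C * ‖g‖)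
      (summable_geometric_of_lt_one (by norm_num) (by norm_num : (1:ℝ)/2 < 1))) hfs_norm
  set F : C(X, A) := ∑' n, fs n with hFdef
  have hFsum : HasSum fs F := hsummable.hasSum
  -- evaluation commutes with the sum
  have heval : ∀ x : X, HasSum (fun n => fs n x) (F x) := by
    intro x
    exact hFsum.map
      ({ toFun := fun h : C(X, A) => h x, map_zero' := rfl, map_add' := fun _ _ => rfl } :
        C(X, A) →+ A) (ContinuousEvalConst.continuous_eval_const x)
  refine ⟨F, ?_, ?_⟩
  · intro y hy
    have h0 : ∀ n, fs n y = 0 := fun n => step0 (gs n) y hy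
    have := heval y
    simp only [h0] at this
    exact this.unique hasSum_zero
  · intro x
    have h1 : HasSum (fun n => P (fs n x)) (P (F x)) := (heval x).map P.toAddMonoidHom P.continuous
    -- telescoping: partial sums are g x - gs n x
    have htel : ∀ n, ∑ k ∈ Finset.range n, P (fs k x) = g x - (gs n).1 x := by
      intro n
      have : ∀ k, P (fs k x) = (gs k).1 x - (gs (k + 1)).1 x := by
        intro k
        rw [hgs_succ k]
        simp [hpc]
      simp only [this]
      rw [Finset.sum_range_sub' (fun k => (gs k).1 x)]
      rfl
    have hlim : Tendsto (fun n => ∑ k ∈ Finset.range n, P (fs k x)) atTop (𝓝 (g x)) := by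
      simp only [htel]
      have : Tendsto (fun n => (gs n).1 x) atTop (𝓝 0) := by
        apply squeeze_zero_norm (fun n => ((gs n).1.norm_coe_le_norm x).trans (hgs_norm n))
        simpa using tendsto_const_nhds.mul
          (tendsto_pow_atTop_nhds_zero_of_lt_one (by norm_num) (by norm_num : (1:ℝ)/2 < 1))
      simpa using tendsto_const_nhds.sub this
    have := tendsto_nhds_unique h1.tendsto_sum_nat hlim
    rw [← hPp]
    exact this
end

section
/- Mayer–Vietoris for function algebras: Let X, X' be compact Hausdorff spaces, Y ⊆ X and Y' ⊆ X' closed subsets, Z ⊆ Y and Z' ⊆ Y' closed subsets, and let f : X → X' be a continuous map with f(Y) ⊆ Y' and f(Z) ⊆ Z'; write g := f|_Y : Y → Y'. Assume that the square consisting of the inclusion Y ↪ X, the map g : Y → Y', the map f : X → X', and the inclusion Y' ↪ X' is a pushout in the category of topological spaces. Then for every Banach algebra A the square of restriction/pullback homomorphisms C(X',Z';A) → C(Y',Z';A) (restriction), C(X',Z';A) → C(X,Z;A) (composition with f), C(Y',Z';A) → C(Y,Z;A) (composition with g), C(X,Z;A) → C(Y,Z;A) (restriction) is a pullback: the canonical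 map from C(X',Z';A) to {(u, v) ∈ C(X,Z;A) × C(Y',Z';A) : u|_Y = v∘g} sending w to (w∘f, w|_{Y'}) is an isomorphism of Banach algebras. -/
set_option linter.unusedSectionVars false
noncomputable section

section Vanish
variable (X : Type) [TopologicalSpace X] (A : Type) [NonUnitalNormedRing A] [NormedSpace ℂ A]
  [IsScalarTower ℂ A A] [SMulCommClass ℂ A A]

/-- `C(X,Y;A)`: the Banach algebra of continuous `A`-valued functions on `X` vanishing on
`Y`, as a subalgebra of `C(X,A)` with the sup norm. -/
def vanishAlg (Y : Set X) : NonUnitalSubalgebra ℂ C(X, A) where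
  carrier := {f | ∀ y ∈ Y, f y = 0}
  add_mem' hf hg y hy := by simp [hf y hy, hg y hy]
  zero_mem' y hy := rfl
  mul_mem' hf hg y hy := by simp [hg y hy]
  smul_mem' c f hf y hy := by simp [hf y hy]

variable {X A}

@[simp] lemma mem_vanishAlg {Y : Set X} {f : C(X, A)} :
    f ∈ vanishAlg X A Y ↔ ∀ y ∈ Y, f y = 0 := Iff.rfl

lemma isClosed_vanishAlg (Y : Set X) : IsClosed ((vanishAlg X A Y : Set C(X, A))) := by
  have : (vanishAlg X A Y : Set C(X, A)) = ⋂ y ∈ Y, {f : C(X, A) | f y = 0} := by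
    ext f; simp [Set.mem_iInter]
  rw [this]
  exact isClosed_biInter fun y _ =>
    isClosed_eq (continuous_eval_const y) continuous_const

variable {Y Z : Set X}

/-- The inclusion `C(X,Y;A) ↪ C(X,Z;A)` for `Z ⊆ Y`. -/
def vanishInclusion (hZY : Z ⊆ Y) (f : vanishAlg X A Y) : vanishAlg X A Z :=
  ⟨f.1, fun z hz => f.2 z (hZY hz)⟩

/-- The restriction map `C(X,Z;A) → C(Y, Y∩Z; A)`, `f ↦ f|_Y`. -/
def vanishRestriction (Y : Set X) (f : vanishAlg X A Z) :
    vanishAlg Y A {y : Y | (y : X) ∈ Z} :=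
  ⟨f.1.restrict Y, fun y hy => f.2 y hy⟩

end Vanish

/-!
STATEMENT 9 (Mayer–Vietoris for function algebras).  Let `X, X'` be compact Hausdorff
spaces, `Z ⊆ Y ⊆ X` and `Z' ⊆ Y' ⊆ X'` closed subsets, and `f : X → X'` continuous with
`f(Y) ⊆ Y'` and `f(Z) ⊆ Z'`; let `g := f|_Y : Y → Y'`.  Assume the square consisting of the
inclusion `Y ↪ X`, of `g`, of `f` and of the inclusion `Y' ↪ X'` is a pushout in the
category of topological spaces (formulated via its universal property).  Then for every
Banach algebra `A` the canonical map
`C(X',Z';A) → {(u,v) ∈ C(X,Z;A) × C(Y',Z';A) : u|_Y = v ∘ g}`, `w ↦ (w ∘ f, w|_{Y'})`,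
is an isomorphism of Banach algebras, i.e. a homeomorphism (being automatically an algebra
homomorphism).
-/
theorem mayer_vietoris_pullback_of_pushout
    (X X' : Type) [TopologicalSpace X] [CompactSpace X] [T2Space X]
    [TopologicalSpace X'] [CompactSpace X'] [T2Space X']
    (Y Z : Set X) (Y' Z' : Set X')
    (hY : IsClosed Y) (hZ : IsClosed Z) (hZY : Z ⊆ Y)
    (hY' : IsClosed Y') (hZ' : IsClosed Z') (hZY' : Z' ⊆ Y')
    (f : C(X, X')) (hfY : Set.MapsTo f Y Y') (hfZ : Set.MapsTo f Z Z')
    -- the square `Y ↪ X, g = f|_Y : Y → Y', f : X → X', Y' ↪ X'` is a pushout in `Top`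
    (hpushout : ∀ (T : Type) [TopologicalSpace T] (u : C(X, T)) (v : C((Y' : Set X'), T)),
      (∀ y : Y, u y = v ⟨f y, hfY y.2⟩) →
      ∃! w : C(X', T), (∀ x, w (f x) = u x) ∧ (∀ y' : (Y' : Set X'), w y' = v y'))
    (A : Type) [NonUnitalNormedRing A] [NormedSpace ℂ A] [IsScalarTower ℂ A A]
    [SMulCommClass ℂ A A] [CompleteSpace A] :
    IsHomeomorph (fun w : vanishAlg X' A Z' =>
      (⟨((w : C(X', A)).comp f, (w : C(X', A)).restrict Y'),
          fun z hz => w.2 (f z) (hfZ hz),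
          fun z' hz' => w.2 z' hz',
          fun y => rfl⟩ :
        {p : C(X, A) × C((Y' : Set X'), A) //
          (∀ z ∈ Z, p.1 z = 0) ∧ (∀ z' : (Y' : Set X'), (z' : X') ∈ Z' → p.2 z' = 0) ∧
          ∀ y : Y, p.1 y = p.2 ⟨f y, hfY y.2⟩})) := by
  classical
  haveI : CompactSpace (Y' : Set X') := isCompact_iff_compactSpace.mp hY'.isCompact
  have hsurj : ∀ x' : X', x' ∈ Set.range f ∨ x' ∈ Y' := by
    by_contra h
    push_neg at h
    obtain ⟨x', hx1, hx2⟩ := h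
    have hK : IsClosed (Set.range f ∪ Y') :=
      (isCompact_range f.continuous).isClosed.union hY'
    obtain ⟨h0, hh0, hh1, -⟩ := exists_continuous_zero_one_of_isClosed hK isClosed_singleton
      (Set.disjoint_singleton_right.mpr (by rintro (h | h); exacts [hx1 h, hx2 h]))
    obtain ⟨w, hw, huniq⟩ := hpushout ℝ 0 0 (fun y => rfl)
    have h1 : (0 : C(X', ℝ)) = w := huniq 0 ⟨fun x => rfl, fun y => rfl⟩
    have h2 : h0 = w := huniq h0
      ⟨fun x => hh0 (Or.inl ⟨x, rfl⟩), fun y' => hh0 (Or.inr y'.2)⟩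
    have h3 := hh1 (Set.mem_singleton x')
    rw [h2, ← h1] at h3
    simp at h3
  let Ψ : {p : C(X, A) × C((Y' : Set X'), A) //
      (∀ z ∈ Z, p.1 z = 0) ∧ (∀ z' : (Y' : Set X'), (z' : X') ∈ Z' → p.2 z' = 0) ∧
      ∀ y : Y, p.1 y = p.2 ⟨f y, hfY y.2⟩} → vanishAlg X' A Z' := fun p =>
    ⟨(hpushout A p.1.1 p.1.2 p.2.2.2).exists.choose, by
      intro z' hz'
      have hspec := (hpushout A p.1.1 p.1.2 p.2.2.2).exists.choose_spec
      have := hspec.2 ⟨z', hZY' hz'⟩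
      exact this.trans (p.2.2.1 ⟨z', hZY' hz'⟩ hz')⟩
  refine (Homeomorph.mk ⟨_, Ψ, ?_, ?_⟩ ?_ ?_).isHomeomorph
  · intro w
    apply Subtype.ext
    exact ((hpushout A ((w : C(X', A)).comp f) ((w : C(X', A)).restrict Y')
        (fun y => rfl)).unique
      (hpushout A ((w : C(X', A)).comp f) ((w : C(X', A)).restrict Y')
        (fun y => rfl)).exists.choose_spec ⟨fun x => rfl, fun y' => rfl⟩)
  · intro p
    have hspec := (hpushout A p.1.1 p.1.2 p.2.2.2).exists.choose_spec
    apply Subtype.ext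
    apply Prod.ext
    · exact ContinuousMap.ext fun x => hspec.1 x
    · exact ContinuousMap.ext fun y' => hspec.2 y'
  · apply Continuous.subtype_mk
    exact ((ContinuousMap.continuous_precomp f).comp continuous_subtype_val).prodMk
      ((ContinuousMap.continuous_restrict Y').comp continuous_subtype_val)
  · show Continuous Ψ
    have hlip : LipschitzWith 1 Ψ := by
      apply LipschitzWith.of_dist_le_mul
      intro p q
      rw [NNReal.coe_one, one_mul, Subtype.dist_eq]
      have hp := (hpushout A p.1.1 p.1.2 p.2.2.2).exists.choose_spec
      have hq := (hpushout A q.1.1 q.1.2 q.2.2.2).exists.choose_spec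
      rw [ContinuousMap.dist_le dist_nonneg]
      intro x'
      have hdist : dist (p : C(X, A) × C((Y' : Set X'), A)) (q : C(X, A) × C((Y' : Set X'), A))
          = dist p q := (Subtype.dist_eq p q).symm
      rcases hsurj x' with ⟨x, rfl⟩ | hx'
      · calc dist ((Ψ p : C(X', A)) (f x)) ((Ψ q : C(X', A)) (f x))
            = dist (p.1.1 x) (q.1.1 x) := by rw [hp.1, hq.1]
          _ ≤ dist p.1.1 q.1.1 := ContinuousMap.dist_apply_le_dist x
          _ ≤ dist p.1 q.1 := by rw [Prod.dist_eq]; exact le_max_left _ _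
          _ = dist p q := hdist
      · calc dist ((Ψ p : C(X', A)) x') ((Ψ q : C(X', A)) x')
            = dist (p.1.2 ⟨x', hx'⟩) (q.1.2 ⟨x', hx'⟩) := by
              rw [hp.2 ⟨x', hx'⟩, hq.2 ⟨x', hx'⟩]
          _ ≤ dist p.1.2 q.1.2 := ContinuousMap.dist_apply_le_dist _
          _ ≤ dist p.1 q.1 := by rw [Prod.dist_eq]; exact le_max_right _ _
          _ = dist p q := hdist


    exact hlip.continuous
end
end

section
/- Let φ₁, φ₂ : A → B be orthogonal continuous homomorphisms of Banach algebras, i.e. φ₁(a)φ₂(a') = 0 = φ₂(a')φ₁(a) for all a, a' ∈ A. Then φ₁ + φ₂ is a continuous homomorphism, Σφ₁ and Σφ₂ are orthogonal homomorphisms from ΣA to ΣB, and Σ(φ₁ + φ₂) = Σφ₁ + Σφ₂ is homotopic to the concatenation Σφ₁ ∙ Σφ₂ : ΣA → ΣB, which is defined by (Σφ₁ ∙ Σφ₂)(f)(t) = φ₁(f(2t)) for t ∈ (0, 1/2] and (Σφ₁ ∙ Σφ₂)(f)(t) = φ₂(f(2t − 1)) for t ∈ [1/2, 1). -/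
set_option synthInstance.maxHeartbeats 1000000
set_option maxHeartbeats 2000000
set_option linter.unusedSectionVars false
noncomputable section
open scoped unitInterval

section Susp
variable (A : Type) [NonUnitalNormedRing A] [NormedSpace ℂ A] [IsScalarTower ℂ A A] [SMulCommClass ℂ A A]

/-- `ΣA`, the suspension of `A`: continuous functions on `[0,1]` vanishing at both endpoints. -/
def suspAlg : NonUnitalSubalgebra ℂ C(unitInterval, A) := vanishAlg unitInterval A {0, 1}

variable {A} {B : Type} [NonUnitalNormedRing B] [NormedSpace ℂ B] [IsScalarTower ℂ B B] [SMulCommClass ℂ B B]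

lemma susp_apply_zero (f : suspAlg A) : f.1 0 = 0 := f.2 0 (Set.mem_insert _ _)
lemma susp_apply_one (f : suspAlg A) : f.1 1 = 0 := f.2 1 (Set.mem_insert_of_mem _ rfl)

/-- Postcomposition with a continuous homomorphism. -/
def postcompHom (φ : A →ₙₐ[ℂ] B) (hφ : Continuous φ) :
    C(unitInterval, A) →ₙₐ[ℂ] C(unitInterval, B) where
  toFun f := (⟨⇑φ, hφ⟩ : C(A, B)).comp f
  map_smul' c f := by ext t; simp
  map_zero' := by ext t; simp
  map_add' f g := by ext t; simp
  map_mul' f g := by ext t; simp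

@[simp] lemma postcompHom_apply (φ : A →ₙₐ[ℂ] B) (hφ : Continuous φ) (f : C(unitInterval, A))
    (t : unitInterval) : postcompHom φ hφ f t = φ (f t) := rfl

/-- `Σφ`, the suspension of a continuous homomorphism `φ`. -/
def suspMap (φ : A →ₙₐ[ℂ] B) (hφ : Continuous φ) : suspAlg A →ₙₐ[ℂ] suspAlg B where
  toFun f := ⟨postcompHom φ hφ f.1, by
    rintro y (rfl | rfl)
    · simp [susp_apply_zero f]
    · simp [susp_apply_one f]⟩
  map_smul' c f := by apply Subtype.ext; exact map_smul (postcompHom φ hφ) c f.1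
  map_zero' := by apply Subtype.ext; exact map_zero (postcompHom φ hφ)
  map_add' f g := by apply Subtype.ext; exact map_add (postcompHom φ hφ) f.1 g.1
  map_mul' f g := by apply Subtype.ext; exact map_mul (postcompHom φ hφ) f.1 g.1

@[simp] lemma suspMap_apply (φ : A →ₙₐ[ℂ] B) (hφ : Continuous φ) (f : suspAlg A) (t : unitInterval) :
    ((suspMap φ hφ f : suspAlg B) : C(unitInterval, B)) t = φ (f.1 t) := rfl

lemma continuous_suspMap (φ : A →ₙₐ[ℂ] B) (hφ : Continuous φ) : Continuous (suspMap φ hφ) := by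
  apply Continuous.subtype_mk
  exact (ContinuousMap.continuous_postcomp _).comp continuous_subtype_val

end Susp

section MappingCone
variable {D A : Type}
  [NonUnitalNormedRing D] [NormedSpace ℂ D] [IsScalarTower ℂ D D] [SMulCommClass ℂ D D]
  [NonUnitalNormedRing A] [NormedSpace ℂ A] [IsScalarTower ℂ A A] [SMulCommClass ℂ A A]

/-- The mapping cone `C_π = {(c, d) ∈ CA × D : c(1) = 0, c(0) = π(d)}` of `π : D → A`,
as a closed subalgebra of `C([0,1], A) × D` (with the maximum norm). -/
def mappingCone (π : D →ₙₐ[ℂ] A) : NonUnitalSubalgebra ℂ (C(unitInterval, A) × D) where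
  carrier := {p | p.1 1 = 0 ∧ p.1 0 = π p.2}
  add_mem' := by
    rintro p q ⟨hp1, hp0⟩ ⟨hq1, hq0⟩
    exact ⟨by simp [hp1, hq1], by simp [hp0, hq0]⟩
  zero_mem' := ⟨rfl, by simp⟩
  mul_mem' := by
    rintro p q ⟨hp1, hp0⟩ ⟨hq1, hq0⟩
    exact ⟨by simp [hp1, hq1], by simp [hp0, hq0]⟩
  smul_mem' := by
    rintro c p ⟨hp1, hp0⟩
    exact ⟨by simp [hp1], by simp [hp0]⟩

@[simp] lemma mem_mappingCone {π : D →ₙₐ[ℂ] A} {p : C(unitInterval, A) × D} :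
    p ∈ mappingCone π ↔ p.1 1 = 0 ∧ p.1 0 = π p.2 := Iff.rfl

lemma isClosed_mappingCone (π : D →ₙₐ[ℂ] A) (hπ : Continuous π) :
    IsClosed ((mappingCone π : Set (C(unitInterval, A) × D))) := by
  have h1 : IsClosed {p : C(unitInterval, A) × D | p.1 1 = 0} :=
    isClosed_eq ((continuous_eval_const 1).comp continuous_fst) continuous_const
  have h2 : IsClosed {p : C(unitInterval, A) × D | p.1 0 = π p.2} :=
    isClosed_eq ((continuous_eval_const 0).comp continuous_fst)
      (hπ.comp continuous_snd)
  exact h1.inter h2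

/-- The canonical epimorphism `ε(π) : C_π → D, (c, d) ↦ d`. -/
def coneEps (π : D →ₙₐ[ℂ] A) : mappingCone π →ₙₐ[ℂ] D where
  toFun p := p.1.2
  map_smul' _ _ := rfl
  map_zero' := rfl
  map_add' _ _ := rfl
  map_mul' _ _ := rfl

lemma continuous_coneEps (π : D →ₙₐ[ℂ] A) : Continuous (coneEps π) :=
  continuous_snd.comp continuous_subtype_val

/-- The canonical inclusion `ι(π) : ΣA → C_π, f ↦ (f, 0)`. -/
def coneIota (π : D →ₙₐ[ℂ] A) : suspAlg A →ₙₐ[ℂ] mappingCone π where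
  toFun f := ⟨(f.1, 0), ⟨susp_apply_one f, by simp [susp_apply_zero f]⟩⟩
  map_smul' c f := by apply Subtype.ext; exact Prod.ext (by rfl) (by simp)
  map_zero' := by apply Subtype.ext; exact Prod.ext (by rfl) (by simp)
  map_add' f g := by apply Subtype.ext; exact Prod.ext (by rfl) (by simp)
  map_mul' f g := by apply Subtype.ext; exact Prod.ext (by rfl) (by simp)

lemma continuous_coneIota (π : D →ₙₐ[ℂ] A) : Continuous (coneIota π) := by
  apply Continuous.subtype_mk
  exact (continuous_subtype_val).prodMk continuous_const

end MappingCone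

section Homotopy
/-- Two continuous homomorphisms `φ, ψ : A → B` are homotopic if there is a continuous
homomorphism `H : A → C([0,1], B)` with `ev₀ ∘ H = φ` and `ev₁ ∘ H = ψ`. -/
def NAlgHomotopic {A B : Type} [NonUnitalNonAssocSemiring A] [Module ℂ A] [TopologicalSpace A]
    [NonUnitalNonAssocSemiring B] [Module ℂ B] [TopologicalSpace B] [IsTopologicalSemiring B]
    [ContinuousConstSMul ℂ B] (φ ψ : A →ₙₐ[ℂ] B) : Prop :=
  ∃ H : A →ₙₐ[ℂ] C(unitInterval, B),
    Continuous H ∧ (∀ a, H a 0 = φ a) ∧ (∀ a, H a 1 = ψ a)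
end Homotopy

section Construction
variable {A B : Type}
  [NonUnitalNormedRing A] [NormedSpace ℂ A] [IsScalarTower ℂ A A] [SMulCommClass ℂ A A]
  [NonUnitalNormedRing B] [NormedSpace ℂ B] [IsScalarTower ℂ B B] [SMulCommClass ℂ B B]

/-- The sum of two orthogonal homomorphisms, as a homomorphism. -/
def sumHom (φ₁ φ₂ : A →ₙₐ[ℂ] B)
    (horth : ∀ a a' : A, φ₁ a * φ₂ a' = 0 ∧ φ₂ a' * φ₁ a = 0) : A →ₙₐ[ℂ] B where
  toFun a := φ₁ a + φ₂ a
  map_smul' c a := by simp [map_smul, smul_add]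
  map_zero' := by simp
  map_add' a b := by simp only [map_add]; abel
  map_mul' a b := by
    simp only [map_mul, add_mul, mul_add, (horth a b).1, (horth b a).2]
    abel

/-- first reparametrization -/
def rpMap (s t : unitInterval) : unitInterval :=
  Set.projIcc 0 1 zero_le_one ((1 + (s : ℝ)) * t)

/-- second reparametrization -/
def rqMap (s t : unitInterval) : unitInterval :=
  Set.projIcc 0 1 zero_le_one ((1 + (s : ℝ)) * t - s)

lemma continuous_rpMap : Continuous (fun p : unitInterval × unitInterval => rpMap p.1 p.2) :=
  continuous_projIcc.comp (by fun_prop)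

lemma continuous_rqMap : Continuous (fun p : unitInterval × unitInterval => rqMap p.1 p.2) :=
  continuous_projIcc.comp (by fun_prop)

lemma rpMap_zero_right (s : unitInterval) : rpMap s 0 = 0 := by
  apply Subtype.ext
  simp only [rpMap, Set.coe_projIcc, Set.Icc.coe_zero, mul_zero]
  norm_num

lemma rqMap_zero_right (s : unitInterval) : rqMap s 0 = 0 := by
  have h1 := s.2.1
  apply Subtype.ext
  simp only [rqMap, Set.coe_projIcc, Set.Icc.coe_zero, mul_zero, zero_sub]
  rw [min_eq_right (by linarith), max_eq_left (by linarith)]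

lemma rpMap_one_right (s : unitInterval) : rpMap s 1 = 1 := by
  have h1 := s.2.1
  apply Subtype.ext
  simp only [rpMap, Set.coe_projIcc, Set.Icc.coe_one, mul_one]
  rw [min_eq_left (by linarith), max_eq_right (by linarith)]

lemma rqMap_one_right (s : unitInterval) : rqMap s 1 = 1 := by
  apply Subtype.ext
  simp only [rqMap, Set.coe_projIcc, Set.Icc.coe_one, mul_one, add_sub_cancel_right]
  norm_num

lemma rpMap_zero_left (t : unitInterval) : rpMap 0 t = t := by
  apply Subtype.ext
  simp only [rpMap, Set.coe_projIcc, Set.Icc.coe_zero, add_zero, one_mul]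
  rw [min_eq_right t.2.2, max_eq_right t.2.1]

lemma rqMap_zero_left (t : unitInterval) : rqMap 0 t = t := by
  apply Subtype.ext
  simp only [rqMap, Set.coe_projIcc, Set.Icc.coe_zero, add_zero, one_mul, sub_zero]
  rw [min_eq_right t.2.2, max_eq_right t.2.1]

lemma rpMap_one_left (t : unitInterval) :
    rpMap 1 t = Set.projIcc 0 1 zero_le_one (2 * (t : ℝ)) := by
  simp only [rpMap, Set.Icc.coe_one]
  norm_num

lemma rqMap_one_left (t : unitInterval) :
    rqMap 1 t = Set.projIcc 0 1 zero_le_one (2 * (t : ℝ) - 1) := by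
  simp only [rqMap, Set.Icc.coe_one]
  norm_num

variable (φ₁ φ₂ : A →ₙₐ[ℂ] B) (hφ₁ : Continuous φ₁) (hφ₂ : Continuous φ₂)

/-- underlying function of the homotopy -/
def Hfn (f : suspAlg A) (s : unitInterval) : C(unitInterval, B) :=
  ⟨fun t => φ₁ (f.1 (rpMap s t)) + φ₂ (f.1 (rqMap s t)), by
    apply Continuous.add
    · exact hφ₁.comp (f.1.continuous.comp
        (continuous_rpMap.comp (continuous_const.prodMk continuous_id)))
    · exact hφ₂.comp (f.1.continuous.comp
        (continuous_rqMap.comp (continuous_const.prodMk continuous_id)))⟩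

@[simp] lemma Hfn_apply (f : suspAlg A) (s t : unitInterval) :
    Hfn φ₁ φ₂ hφ₁ hφ₂ f s t = φ₁ (f.1 (rpMap s t)) + φ₂ (f.1 (rqMap s t)) := rfl

lemma Hfn_mem (f : suspAlg A) (s : unitInterval) :
    Hfn φ₁ φ₂ hφ₁ hφ₂ f s ∈ suspAlg B := by
  rintro y (rfl | rfl)
  · simp [rpMap_zero_right, rqMap_zero_right, susp_apply_zero f]
  · simp [rpMap_one_right, rqMap_one_right, susp_apply_one f]

/-- the homotopy, as a function -/
def Hcm (f : suspAlg A) : C(unitInterval, suspAlg B) :=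
  ⟨fun s => ⟨Hfn φ₁ φ₂ hφ₁ hφ₂ f s, Hfn_mem φ₁ φ₂ hφ₁ hφ₂ f s⟩, by
    apply Continuous.subtype_mk
    apply ContinuousMap.continuous_of_continuous_uncurry
    apply Continuous.add
    · exact hφ₁.comp (f.1.continuous.comp continuous_rpMap)
    · exact hφ₂.comp (f.1.continuous.comp continuous_rqMap)⟩

@[simp] lemma Hcm_apply (f : suspAlg A) (s t : unitInterval) :
    ((Hcm φ₁ φ₂ hφ₁ hφ₂ f s : suspAlg B) : C(unitInterval, B)) t
      = φ₁ (f.1 (rpMap s t)) + φ₂ (f.1 (rqMap s t)) := rfl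

/-- The homotopy as a continuous homomorphism. -/
def Hhom (horth : ∀ a a' : A, φ₁ a * φ₂ a' = 0 ∧ φ₂ a' * φ₁ a = 0) :
    suspAlg A →ₙₐ[ℂ] C(unitInterval, suspAlg B) where
  toFun := Hcm φ₁ φ₂ hφ₁ hφ₂
  map_smul' c f := by
    ext s : 1
    apply Subtype.ext
    ext t
    simp [map_smul, smul_add]
  map_zero' := by
    ext s : 1
    apply Subtype.ext
    ext t
    simp
  map_add' f g := by
    ext s : 1
    apply Subtype.ext
    ext t
    simp only [Hcm_apply, ContinuousMap.add_apply, NonUnitalSubalgebra.coe_add, map_add]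
    abel
  map_mul' f g := by
    ext s : 1
    apply Subtype.ext
    ext t
    simp only [Hcm_apply, ContinuousMap.mul_apply, NonUnitalSubalgebra.coe_mul, map_mul,
      add_mul, mul_add, (horth _ _).1, (horth _ _).2]
    abel

lemma continuous_Hhom (horth : ∀ a a' : A, φ₁ a * φ₂ a' = 0 ∧ φ₂ a' * φ₁ a = 0) :
    Continuous (Hhom φ₁ φ₂ hφ₁ hφ₂ horth) := by
  apply ContinuousMap.continuous_of_continuous_uncurry
  apply Continuous.subtype_mk
  apply ContinuousMap.continuous_of_continuous_uncurry
  -- continuous in (f, s, t) jointly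
  apply Continuous.add
  · apply hφ₁.comp
    exact continuous_eval.comp
      (((continuous_subtype_val.comp (continuous_fst.comp continuous_fst))).prodMk
        (continuous_rpMap.comp ((continuous_snd.comp continuous_fst).prodMk continuous_snd)))
  · apply hφ₂.comp
    exact continuous_eval.comp
      (((continuous_subtype_val.comp (continuous_fst.comp continuous_fst))).prodMk
        (continuous_rqMap.comp ((continuous_snd.comp continuous_fst).prodMk continuous_snd)))

end Construction

/-!
STATEMENT 11.  Let `φ₁, φ₂ : A → B` be orthogonal continuous homomorphisms of Banach
algebras.  Then `φ₁ + φ₂` is a continuous homomorphism, `Σφ₁` and `Σφ₂` are orthogonal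
homomorphisms `ΣA → ΣB`, `Σ(φ₁ + φ₂) = Σφ₁ + Σφ₂`, and this homomorphism is homotopic to
the concatenation `Σφ₁ ∙ Σφ₂` defined by `(Σφ₁ ∙ Σφ₂)(f)(t) = φ₁(f(2t))` for `t ≤ 1/2` and
`= φ₂(f(2t - 1))` for `t ≥ 1/2`.
-/
theorem orthogonal_homomorphisms_sum_homotopic_concatenation
    (A B : Type)
    [NonUnitalNormedRing A] [NormedSpace ℂ A] [IsScalarTower ℂ A A] [SMulCommClass ℂ A A] [CompleteSpace A]
    [NonUnitalNormedRing B] [NormedSpace ℂ B] [IsScalarTower ℂ B B] [SMulCommClass ℂ B B] [CompleteSpace B]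
    (φ₁ φ₂ : A →ₙₐ[ℂ] B) (hφ₁ : Continuous φ₁) (hφ₂ : Continuous φ₂)
    (horth : ∀ a a' : A, φ₁ a * φ₂ a' = 0 ∧ φ₂ a' * φ₁ a = 0) :
    ∃ (ψ : A →ₙₐ[ℂ] B) (hψc : Continuous ψ),
      -- `φ₁ + φ₂` is a (continuous) homomorphism `ψ`
      (∀ a, ψ a = φ₁ a + φ₂ a) ∧
      -- `Σφ₁` and `Σφ₂` are orthogonal homomorphisms from `ΣA` to `ΣB`
      (∀ f g : suspAlg A,
        suspMap φ₁ hφ₁ f * suspMap φ₂ hφ₂ g = 0 ∧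
        suspMap φ₂ hφ₂ g * suspMap φ₁ hφ₁ f = 0) ∧
      -- `Σ(φ₁ + φ₂) = Σφ₁ + Σφ₂`
      (∀ f : suspAlg A, suspMap ψ hψc f = suspMap φ₁ hφ₁ f + suspMap φ₂ hφ₂ f) ∧
      -- and it is homotopic to the concatenation `Σφ₁ ∙ Σφ₂`
      ∃ conc : suspAlg A →ₙₐ[ℂ] suspAlg B,
        (∀ (f : suspAlg A) (t : unitInterval), (t : ℝ) ≤ 1 / 2 →
          (conc f).1 t = φ₁ (f.1 (Set.projIcc 0 1 zero_le_one (2 * (t : ℝ))))) ∧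
        (∀ (f : suspAlg A) (t : unitInterval), 1 / 2 ≤ (t : ℝ) →
          (conc f).1 t = φ₂ (f.1 (Set.projIcc 0 1 zero_le_one (2 * (t : ℝ) - 1)))) ∧
        NAlgHomotopic (suspMap ψ hψc) conc := by
  have hψc : Continuous (sumHom φ₁ φ₂ horth) := by
    show Continuous fun a => φ₁ a + φ₂ a
    exact hφ₁.add hφ₂
  refine ⟨sumHom φ₁ φ₂ horth, hψc, fun a => rfl, ?_, ?_, ?_⟩
  · intro f g
    constructor
    · apply Subtype.ext
      ext t
      simp only [NonUnitalSubalgebra.coe_mul, ContinuousMap.mul_apply, suspMap_apply,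
        (horth _ _).1, ZeroMemClass.coe_zero, ContinuousMap.zero_apply]
    · apply Subtype.ext
      ext t
      simp only [NonUnitalSubalgebra.coe_mul, ContinuousMap.mul_apply, suspMap_apply,
        (horth _ _).2, ZeroMemClass.coe_zero, ContinuousMap.zero_apply]
  · intro f
    apply Subtype.ext
    ext t
    simp only [suspMap_apply, NonUnitalSubalgebra.coe_add, ContinuousMap.add_apply]
    rfl
  · refine ⟨{ toFun := fun f => Hhom φ₁ φ₂ hφ₁ hφ₂ horth f 1
              map_smul' := fun c f => by simp only [map_smul]; rfl
              map_zero' := by simp only [map_zero]; rfl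
              map_add' := fun f g => by simp only [map_add]; rfl
              map_mul' := fun f g => by simp only [map_mul]; rfl }, ?_, ?_, ?_⟩
    · intro f t ht
      show φ₁ (f.1 (rpMap 1 t)) + φ₂ (f.1 (rqMap 1 t)) = _
      have hq : rqMap 1 t = 0 := by
        rw [rqMap_one_left, Set.projIcc_of_le_left _ (by linarith)]
        rfl
      rw [hq, susp_apply_zero f, map_zero, add_zero, rpMap_one_left]
    · intro f t ht
      show φ₁ (f.1 (rpMap 1 t)) + φ₂ (f.1 (rqMap 1 t)) = _
      have hp : rpMap 1 t = 1 := by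
        rw [rpMap_one_left, Set.projIcc_of_right_le _ (by linarith)]
        rfl
      rw [hp, susp_apply_one f, map_zero, zero_add, rqMap_one_left]
    · refine ⟨Hhom φ₁ φ₂ hφ₁ hφ₂ horth, continuous_Hhom φ₁ φ₂ hφ₁ hφ₂ horth,
        fun f => ?_, fun f => rfl⟩
      apply Subtype.ext
      ext t
      show φ₁ (f.1 (rpMap 0 t)) + φ₂ (f.1 (rqMap 0 t)) = _
      rw [rpMap_zero_left, rqMap_zero_left]
      rfl
end
end

section
/- Let F be a functor from the category BanAlg of Banach algebras and continuous homomorphisms into an additive category, and assume F is homotopy invariant and half-exact for semi-split extensions. Then for every semi-split extension B ↣^i D ↠^π A of Banach algebras, the homomorphism κ_π : B → C_π, b ↦ (0, i(b)), from B into the mapping cone C_π of π induces an isomorphism F(B) ≅ F(C_π). -/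
set_option linter.unusedSectionVars false
noncomputable section
open scoped unitInterval

open CategoryTheory

/-- A bundled (possibly non-unital, possibly degenerate) complex Banach algebra. -/
structure BanAlg : Type 1 where
  carrier : Type
  [nonUnitalNormedRing : NonUnitalNormedRing carrier]
  [normedSpace : NormedSpace ℂ carrier]
  [isScalarTower : IsScalarTower ℂ carrier carrier]
  [smulCommClass : SMulCommClass ℂ carrier carrier]
  [completeSpace : CompleteSpace carrier]

namespace BanAlg

attribute [instance] nonUnitalNormedRing normedSpace isScalarTower smulCommClass completeSpace

instance : CoeSort BanAlg Type := ⟨carrier⟩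

/-- Build a bundled Banach algebra from an unbundled one. -/
def of (A : Type) [NonUnitalNormedRing A] [NormedSpace ℂ A] [IsScalarTower ℂ A A]
    [SMulCommClass ℂ A A] [CompleteSpace A] : BanAlg := ⟨A⟩

/-- The category `BanAlg` of Banach algebras and continuous algebra homomorphisms. -/
instance : Category BanAlg where
  Hom A B := {f : A →ₙₐ[ℂ] B // Continuous f}
  id A := ⟨NonUnitalAlgHom.id ℂ A, continuous_id⟩
  comp f g := ⟨g.1.comp f.1, g.2.comp f.2⟩
  id_comp f := Subtype.ext (by ext x; rfl)
  comp_id f := Subtype.ext (by ext x; rfl)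
  assoc f g h := Subtype.ext (by ext x; rfl)

/-- A closed subalgebra of a Banach algebra is a Banach algebra. -/
def ofSubalg {R : Type} [NonUnitalNormedRing R] [NormedSpace ℂ R] [IsScalarTower ℂ R R]
    [SMulCommClass ℂ R R] [CompleteSpace R] (S : NonUnitalSubalgebra ℂ R)
    (hS : IsClosed (S : Set R)) : BanAlg :=
  letI : CompleteSpace S := hS.completeSpace_coe
  letI : NormedSpace ℂ S := SubmoduleClass.toNormedSpace S
  BanAlg.of S

end BanAlg

/-- The suspension, as an object of `BanAlg`. -/
def suspObj (A : BanAlg) : BanAlg := BanAlg.ofSubalg (suspAlg A) (isClosed_vanishAlg _)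

/-- The suspension of a morphism of `BanAlg`. -/
def suspHom {A B : BanAlg} (f : A ⟶ B) : suspObj A ⟶ suspObj B :=
  ⟨suspMap f.1 f.2, continuous_suspMap f.1 f.2⟩

/-- The suspension functor `Σ : BanAlg ⥤ BanAlg`. -/
def suspFunctor : BanAlg ⥤ BanAlg where
  obj := suspObj
  map := suspHom
  map_id := by
    intro A
    apply Subtype.ext
    apply NonUnitalAlgHom.ext
    intro f
    apply Subtype.ext
    ext t
    rfl
  map_comp := by
    intro A B C f g
    apply Subtype.ext
    apply NonUnitalAlgHom.ext
    intro x
    apply Subtype.ext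
    ext t
    rfl

/-- The mapping cone of a morphism of `BanAlg`, as an object of `BanAlg`. -/
def coneObj {D A : BanAlg} (π : D ⟶ A) : BanAlg :=
  BanAlg.ofSubalg (mappingCone π.1) (isClosed_mappingCone π.1 π.2)

/-- The canonical inclusion `ι(π) : ΣA → C_π`, as a morphism of `BanAlg`. -/
def coneIotaHom {D A : BanAlg} (π : D ⟶ A) : suspObj A ⟶ coneObj π :=
  ⟨coneIota π.1, continuous_coneIota π.1⟩

/-- Extensions of Banach algebras: `i` is injective with closed range, `π` is surjective,
and `range i = ker π`. -/
structure IsExtensionHom {B D A : BanAlg} (i : B ⟶ D) (π : D ⟶ A) : Prop where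
  inj : Function.Injective i.1
  closedRange : IsClosed (Set.range i.1)
  surj : Function.Surjective π.1
  exact : Set.range i.1 = {d | π.1 d = 0}

/-- A (quotient map of an) extension is semi-split if it admits a continuous linear
(not necessarily multiplicative) section. -/
def IsSemiSplit {D A : BanAlg} (π : D ⟶ A) : Prop :=
  ∃ s : A.carrier →L[ℂ] D.carrier, ∀ a, π.1 (s a) = a

/-- The canonical comparison morphism `κ_π : B → C_π`, `b ↦ (0, i(b))`. -/
def coneKappaHom {B D A : BanAlg} (i : B ⟶ D) (π : D ⟶ A) (hext : IsExtensionHom i π) :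
    B ⟶ coneObj π := by
  have hker : ∀ b, (0 : A.carrier) = π.1 (i.1 b) := by
    intro b
    have : i.1 b ∈ {d | π.1 d = 0} := hext.exact ▸ Set.mem_range_self b
    exact this.symm
  refine ⟨{ toFun := fun b => ⟨((0 : C(unitInterval, A.carrier)), i.1 b), ⟨rfl, hker b⟩⟩,
            map_smul' := ?_, map_zero' := ?_, map_add' := ?_, map_mul' := ?_ }, ?_⟩
  · intro c b
    apply Subtype.ext
    refine Prod.ext ?_ ?_
    · simp only [map_smul]; exact (smul_zero c).symm
    · simp only [map_smul]; rfl
  · apply Subtype.ext; exact Prod.ext (by simp; rfl) (by simp; rfl)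
  · intro a b
    apply Subtype.ext
    refine Prod.ext ?_ ?_
    · simp only [map_add]; exact (add_zero 0).symm
    · simp only [map_add]; rfl
  · intro a b
    apply Subtype.ext
    refine Prod.ext ?_ ?_
    · simp only [map_mul]; exact (mul_zero 0).symm
    · simp only [map_mul]; rfl
  · exact Continuous.subtype_mk (continuous_const.prodMk (i.2.comp continuous_id)) _

/-- A functor on `BanAlg` is homotopy invariant if it identifies homotopic morphisms. -/
def HomotopyInvariant {𝒞 : Type*} [Category 𝒞] (F : BanAlg ⥤ 𝒞) : Prop :=
  ∀ (A B : BanAlg) (f g : A ⟶ B), NAlgHomotopic f.1 g.1 → F.map f = F.map g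

/-- A functor on `BanAlg` with values in an additive category is half-exact for semi-split
extensions if, for every object `X` and every semi-split extension `B ↣ D ↠ A`, the
sequences of abelian groups `Hom(X,F(B)) → Hom(X,F(D)) → Hom(X,F(A))` and
`Hom(F(A),X) → Hom(F(D),X) → Hom(F(B),X)` are exact in the middle. -/
def HalfExactFunctor {𝒞 : Type*} [Category 𝒞] [Preadditive 𝒞] (F : BanAlg ⥤ 𝒞) : Prop :=
  ∀ (B D A : BanAlg) (i : B ⟶ D) (π : D ⟶ A), IsExtensionHom i π → IsSemiSplit π →
    ∀ X : 𝒞,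
      Function.Exact (fun u : X ⟶ F.obj B => u ≫ F.map i)
        (fun u : X ⟶ F.obj D => u ≫ F.map π) ∧
      Function.Exact (fun u : F.obj A ⟶ X => F.map π ≫ u)
        (fun u : F.obj D ⟶ X => F.map i ≫ u)

/-- A functor on `BanAlg` with values in an additive category is split-exact if for every
split extension `B ↣ D ↠ A` with multiplicative continuous section `σ`, the induced map
`F(B) ⊕ F(A) → F(D)` is an isomorphism. -/
def SplitExactFunctor {𝒞 : Type*} [Category 𝒞] [Preadditive 𝒞]
    [Limits.HasBinaryBiproducts 𝒞] (F : BanAlg ⥤ 𝒞) : Prop :=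
  ∀ (B D A : BanAlg) (i : B ⟶ D) (π : D ⟶ A) (s : A ⟶ D),
    IsExtensionHom i π → s ≫ π = 𝟙 A →
    IsIso (Limits.biprod.desc (F.map i) (F.map s))


/-! ### Auxiliary development for Statement 15 -/

section Statement15Aux
open CategoryTheory

/-- Clamping of a real number into `[0,1]`. -/
noncomputable def pI (r : ℝ) : unitInterval := Set.projIcc (0:ℝ) 1 zero_le_one r

lemma continuous_pI : Continuous pI := continuous_projIcc (h := zero_le_one)

lemma pI_val (r : ℝ) : (pI r : ℝ) = max 0 (min 1 r) := by
  rw [pI, Set.coe_projIcc]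

@[simp] lemma pI_coe (t : unitInterval) : pI (t : ℝ) = t := by
  apply Subtype.ext
  rw [pI_val, min_eq_right t.2.2, max_eq_right t.2.1]

@[simp] lemma pI_zero : pI 0 = 0 := by
  apply Subtype.ext; rw [pI_val]; norm_num

@[simp] lemma pI_one : pI 1 = 1 := by
  apply Subtype.ext; rw [pI_val]; norm_num

lemma pI_of_one_le {r : ℝ} (h : 1 ≤ r) : pI r = 1 := by
  apply Subtype.ext; rw [pI_val, min_eq_left h]; norm_num

lemma pI_of_nonpos {r : ℝ} (h : r ≤ 0) : pI r = 0 := by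
  apply Subtype.ext; rw [pI_val, max_eq_left (le_trans (min_le_right _ _) h)]; rfl

lemma contEval {X : Type*} [TopologicalSpace X] {Z : Type*} [TopologicalSpace Z]
    {g : X → C(unitInterval, Z)} {τ : X → unitInterval}
    (hg : Continuous g) (hτ : Continuous τ) : Continuous fun x => g x (τ x) :=
  ContinuousEval.continuous_eval.comp (hg.prodMk hτ)

/-- The zero homomorphism as a `NonUnitalAlgHom`. -/
def zHom (P Q : BanAlg) : P.carrier →ₙₐ[ℂ] Q.carrier where
  toFun _ := 0
  map_smul' c x := by simp
  map_zero' := rfl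
  map_add' x y := by simp
  map_mul' x y := by simp

/-- The identity morphism, in explicit form. -/
def idMor (P : BanAlg) : P ⟶ P := ⟨NonUnitalAlgHom.id ℂ P.carrier, continuous_id⟩

lemma idMor_eq (P : BanAlg) : idMor P = 𝟙 P := rfl

/-- The zero morphism in `BanAlg`. -/
def zeroMor (P Q : BanAlg) : P ⟶ Q := ⟨zHom P Q, continuous_const⟩

/-- The zero Banach algebra. -/
noncomputable def zeroObj : BanAlg :=
  BanAlg.ofSubalg (vanishAlg unitInterval ℂ Set.univ) (isClosed_vanishAlg _)

lemma zeroObj_all_eq (x : zeroObj) : x = 0 :=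
  Subtype.ext (ContinuousMap.ext fun t => x.2 t (Set.mem_univ t))

lemma ext_zero (Q : BanAlg) : IsExtensionHom (zeroMor zeroObj Q) (𝟙 Q) := by
  constructor
  · intro a b _; rw [zeroObj_all_eq a, zeroObj_all_eq b]
  · have : Set.range (zeroMor zeroObj Q).1 = {(0 : Q.carrier)} := by
      ext d; constructor
      · rintro ⟨x, rfl⟩; rfl
      · rintro rfl; exact ⟨0, rfl⟩
    rw [this]; exact isClosed_singleton
  · intro a; exact ⟨a, rfl⟩
  · ext d; constructor
    · rintro ⟨x, rfl⟩; rfl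
    · intro hd; exact ⟨0, (show d = 0 from hd).symm⟩

/-- The cone `CA` over a Banach algebra: functions vanishing at `1`. -/
noncomputable def coneAlgObj (A : BanAlg) : BanAlg :=
  BanAlg.ofSubalg (vanishAlg unitInterval A ({1} : Set unitInterval)) (isClosed_vanishAlg _)

lemma coneAlg_one {A : BanAlg} (f : coneAlgObj A) : f.1 1 = 0 := f.2 1 rfl

/-- Contraction of the cone (raw function). -/
noncomputable def contrFun (A : BanAlg) (f : (coneAlgObj A).carrier) :
    C(unitInterval, (coneAlgObj A).carrier) :=
  ⟨fun s => ⟨⟨fun t => f.1 (pI ((t:ℝ) + (s:ℝ) * (1 - (t:ℝ)))), by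
      exact f.1.continuous.comp (continuous_pI.comp (by fun_prop))⟩, by
      intro y hy
      rw [show y = 1 from hy]
      show f.1 (pI (((1:unitInterval):ℝ) + (s:ℝ) * (1 - ((1:unitInterval):ℝ)))) = 0
      rw [show (((1:unitInterval):ℝ) + (s:ℝ) * (1 - ((1:unitInterval):ℝ))) = 1 by norm_num, pI_one]
      exact f.2 1 rfl⟩, by
    apply Continuous.subtype_mk
    apply ContinuousMap.continuous_of_continuous_uncurry
    show Continuous fun p : unitInterval × unitInterval =>
      f.1 (pI ((p.2:ℝ) + (p.1:ℝ) * (1 - (p.2:ℝ))))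
    exact (map_continuous f.1).comp (continuous_pI.comp (by fun_prop))⟩

lemma continuous_contrFun (A : BanAlg) : Continuous (contrFun A) := by
  apply ContinuousMap.continuous_of_continuous_uncurry
  apply Continuous.subtype_mk
  apply ContinuousMap.continuous_of_continuous_uncurry
  show Continuous fun p : ((coneAlgObj A).carrier × unitInterval) × unitInterval =>
    (p.1.1.1 : C(unitInterval, A.carrier)) (pI ((p.2:ℝ) + (p.1.2:ℝ) * (1 - (p.2:ℝ))))
  exact contEval ((continuous_subtype_val.comp continuous_fst).comp continuous_fst)
    (continuous_pI.comp (by fun_prop))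

/-- Contraction of the cone. -/
noncomputable def contrMap (A : BanAlg) :
    (coneAlgObj A).carrier →ₙₐ[ℂ] C(unitInterval, (coneAlgObj A).carrier) where
  toFun := contrFun A
  map_smul' c f := by ext s; apply Subtype.ext; ext t; rfl
  map_zero' := by ext s; apply Subtype.ext; ext t; rfl
  map_add' f g := by ext s; apply Subtype.ext; ext t; rfl
  map_mul' f g := by ext s; apply Subtype.ext; ext t; rfl

lemma continuous_contrMap (A : BanAlg) : Continuous (contrMap A) := continuous_contrFun A

lemma coneAlg_contr (A : BanAlg) :
    NAlgHomotopic (idMor (coneAlgObj A)).1 (zeroMor (coneAlgObj A) (coneAlgObj A)).1 := by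
  refine ⟨contrMap A, continuous_contrMap A, ?_, ?_⟩
  · intro f
    apply Subtype.ext; ext t
    show f.1 (pI ((t:ℝ) + ((0:unitInterval):ℝ) * (1 - (t:ℝ)))) = f.1 t
    rw [show ((t:ℝ) + ((0:unitInterval):ℝ) * (1 - (t:ℝ))) = (t:ℝ) by norm_num, pI_coe]
  · intro f
    apply Subtype.ext; ext t
    show f.1 (pI ((t:ℝ) + ((1:unitInterval):ℝ) * (1 - (t:ℝ)))) = 0
    rw [show ((t:ℝ) + ((1:unitInterval):ℝ) * (1 - (t:ℝ))) = 1 by norm_num, pI_one]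
    exact f.2 1 rfl

/-- The canonical epimorphism `ε(ρ) : C_ρ → P` as a morphism of `BanAlg`. -/
def coneEpsHom {P Q : BanAlg} (ρ : P ⟶ Q) : coneObj ρ ⟶ P :=
  ⟨coneEps ρ.1, continuous_coneEps ρ.1⟩

section Cylinder

variable {P Q : BanAlg} (ρ : P ⟶ Q)

/-- The mapping cylinder `Z_ρ = {(f,p) : f(0) = ρ(p)}`. -/
def cylAlg : NonUnitalSubalgebra ℂ (C(unitInterval, Q) × P) where
  carrier := {p | p.1 0 = ρ.1 p.2}
  add_mem' := by
    rintro p q hp hq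
    show (p.1 + q.1) 0 = ρ.1 (p.2 + q.2)
    simp only [ContinuousMap.add_apply, map_add]
    rw [show p.1 0 = ρ.1 p.2 from hp, show q.1 0 = ρ.1 q.2 from hq]
  zero_mem' := by
    show (0 : C(unitInterval, Q)) 0 = ρ.1 0
    simp
  mul_mem' := by
    rintro p q hp hq
    show (p.1 * q.1) 0 = ρ.1 (p.2 * q.2)
    simp only [ContinuousMap.mul_apply, map_mul]
    rw [show p.1 0 = ρ.1 p.2 from hp, show q.1 0 = ρ.1 q.2 from hq]
  smul_mem' := by
    rintro c p hp
    show (c • p.1) 0 = ρ.1 (c • p.2)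
    simp only [ContinuousMap.smul_apply, map_smul]
    rw [show p.1 0 = ρ.1 p.2 from hp]

lemma isClosed_cylAlg : IsClosed ((cylAlg ρ : Set (C(unitInterval, Q) × P))) :=
  isClosed_eq ((continuous_eval_const 0).comp continuous_fst)
    (ρ.2.comp continuous_snd)

/-- The mapping cylinder as an object of `BanAlg`. -/
noncomputable def cylObj : BanAlg := BanAlg.ofSubalg (cylAlg ρ) (isClosed_cylAlg ρ)

/-- Inclusion of the mapping cone into the cylinder. -/
def cylIncl : coneObj ρ ⟶ cylObj ρ :=
  ⟨{ toFun := fun x => ⟨x.1, (mem_mappingCone.mp x.2).2⟩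
     map_smul' := fun c x => Subtype.ext rfl
     map_zero' := Subtype.ext rfl
     map_add' := fun x y => Subtype.ext rfl
     map_mul' := fun x y => Subtype.ext rfl },
   Continuous.subtype_mk continuous_subtype_val _⟩

/-- Evaluation at `1` on the cylinder. -/
def cylEv : cylObj ρ ⟶ Q :=
  ⟨{ toFun := fun p => p.1.1 1
     map_smul' := fun c p => rfl
     map_zero' := rfl
     map_add' := fun p q => rfl
     map_mul' := fun p q => rfl },
   (continuous_eval_const 1).comp (continuous_fst.comp continuous_subtype_val)⟩

/-- The canonical inclusion `P → Z_ρ`. -/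
def cylIn : P ⟶ cylObj ρ :=
  ⟨{ toFun := fun p => ⟨(ContinuousMap.const _ (ρ.1 p), p), rfl⟩
     map_smul' := fun c p => Subtype.ext (Prod.ext
       (by ext t; show ρ.1 (c • p) = c • ρ.1 p; exact map_smul ρ.1 c p) rfl)
     map_zero' := Subtype.ext (Prod.ext
       (by ext t; show ρ.1 0 = 0; exact map_zero ρ.1) rfl)
     map_add' := fun p q => Subtype.ext (Prod.ext
       (by ext t; show ρ.1 (p + q) = ρ.1 p + ρ.1 q; exact map_add ρ.1 p q) rfl)
     map_mul' := fun p q => Subtype.ext (Prod.ext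
       (by ext t; show ρ.1 (p * q) = ρ.1 p * ρ.1 q; exact map_mul ρ.1 p q) rfl) },
   Continuous.subtype_mk ((ContinuousMap.continuous_const'.comp ρ.2).prodMk continuous_id) _⟩

/-- The projection `Z_ρ → P`. -/
def cylPr : cylObj ρ ⟶ P :=
  ⟨{ toFun := fun p => p.1.2
     map_smul' := fun c p => rfl
     map_zero' := rfl
     map_add' := fun p q => rfl
     map_mul' := fun p q => rfl },
   continuous_snd.comp continuous_subtype_val⟩

lemma cylIncl_pr : cylIncl ρ ≫ cylPr ρ = coneEpsHom ρ :=
  Subtype.ext (NonUnitalAlgHom.ext fun x => rfl)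

lemma cylIn_pr : cylIn ρ ≫ cylPr ρ = 𝟙 P :=
  Subtype.ext (NonUnitalAlgHom.ext fun p => rfl)

lemma cylIn_ev : cylIn ρ ≫ cylEv ρ = ρ :=
  Subtype.ext (NonUnitalAlgHom.ext fun p => rfl)

lemma range_cylIncl :
    Set.range (cylIncl ρ).1 = {p : (cylObj ρ).carrier | p.1.1 1 = 0} := by
  ext p; constructor
  · rintro ⟨x, rfl⟩; exact (mem_mappingCone.mp x.2).1
  · intro hp; exact ⟨⟨p.1, mem_mappingCone.mpr ⟨hp, p.2⟩⟩, Subtype.ext rfl⟩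

lemma ext_cyl : IsExtensionHom (cylIncl ρ) (cylEv ρ) := by
  constructor
  · intro x y h
    have h2 := congrArg (Subtype.val) h
    exact Subtype.ext h2
  · rw [range_cylIncl]
    exact isClosed_eq ((continuous_eval_const 1).comp
      (continuous_fst.comp continuous_subtype_val)) continuous_const
  · intro a
    refine ⟨⟨(⟨fun t => ((t:ℝ):ℂ) • a, by fun_prop⟩, 0), by
      show ((((0:unitInterval):ℝ):ℂ) • a) = ρ.1 0
      simp⟩, ?_⟩
    show ((((1:unitInterval):ℝ):ℂ) • a) = a
    norm_num
  · rw [range_cylIncl]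
    rfl

lemma ss_cyl : IsSemiSplit (cylEv ρ) := by
  refine ⟨⟨⟨⟨fun a => ⟨(⟨fun t => ((t:ℝ):ℂ) • a, by fun_prop⟩, 0), by
      show ((((0:unitInterval):ℝ):ℂ) • a) = ρ.1 0; simp⟩, ?_⟩, ?_⟩, ?_⟩, ?_⟩
  · intro a b
    apply Subtype.ext; apply Prod.ext
    · ext t; show ((t:ℝ):ℂ) • (a + b) = ((t:ℝ):ℂ) • a + ((t:ℝ):ℂ) • b; rw [smul_add]
    · show (0 : P.carrier) = 0 + 0; rw [add_zero]
  · intro c a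
    apply Subtype.ext; apply Prod.ext
    · ext t; show ((t:ℝ):ℂ) • (c • a) = c • (((t:ℝ):ℂ) • a); rw [smul_comm]
    · show (0 : P.carrier) = c • 0; rw [smul_zero]
  · apply Continuous.subtype_mk
    apply Continuous.prodMk _ continuous_const
    apply ContinuousMap.continuous_of_continuous_uncurry
    exact ((Complex.continuous_ofReal.comp (continuous_subtype_val.comp continuous_snd)).smul
      continuous_fst)
  · intro a
    show ((((1:unitInterval):ℝ):ℂ) • a) = a
    norm_num

end Cylinder

end Statement15Aux

section Statement15Specific
open CategoryTheory

variable {B D A : BanAlg} (i : B ⟶ D) (π : D ⟶ A)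

lemma pi_i_zero (hext : IsExtensionHom i π) (b : B.carrier) : π.1 (i.1 b) = 0 := by
  have : i.1 b ∈ {d | π.1 d = 0} := hext.exact ▸ Set.mem_range_self b
  exact this

/-- The quotient map `σ : C_π → CA` (raw function). -/
def sigmaFun (x : (coneObj π).carrier) : (coneAlgObj A).carrier :=
  ⟨x.1.1, by
    intro y hy
    rw [show y = 1 from hy]
    exact (mem_mappingCone.mp x.2).1⟩

/-- The quotient map `σ : C_π → CA`. -/
def sigmaHom : coneObj π ⟶ coneAlgObj A :=
  ⟨{ toFun := sigmaFun π
     map_smul' := fun c x => Subtype.ext rfl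
     map_zero' := Subtype.ext rfl
     map_add' := fun x y => Subtype.ext rfl
     map_mul' := fun x y => Subtype.ext rfl },
   Continuous.subtype_mk (continuous_fst.comp continuous_subtype_val) _⟩

lemma range_kappa (hext : IsExtensionHom i π) :
    Set.range (coneKappaHom i π hext).1 = {x : (coneObj π).carrier | x.1.1 = 0} := by
  ext x; constructor
  · rintro ⟨b, rfl⟩; rfl
  · intro hx
    have h2 : π.1 x.1.2 = 0 := by
      have h3 := (mem_mappingCone.mp x.2).2
      rw [show x.1.1 = 0 from hx] at h3
      exact h3.symm
    have h4 : x.1.2 ∈ Set.range i.1 := by rw [hext.exact]; exact h2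
    obtain ⟨b, hb⟩ := h4
    exact ⟨b, Subtype.ext (Prod.ext (show x.1.1 = 0 from hx).symm hb)⟩

lemma ext_S1 (hext : IsExtensionHom i π) :
    IsExtensionHom (coneKappaHom i π hext) (sigmaHom π) := by
  constructor
  · intro a b h
    apply hext.inj
    have h2 := congrArg (fun z : (coneObj π).carrier => z.1.2) h
    exact h2
  · rw [range_kappa i π hext]
    exact isClosed_eq (continuous_fst.comp continuous_subtype_val) continuous_const
  · intro f
    obtain ⟨d, hd⟩ := hext.surj (f.1 0)
    exact ⟨⟨(f.1, d), mem_mappingCone.mpr ⟨f.2 1 rfl, hd.symm⟩⟩, Subtype.ext rfl⟩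
  · rw [range_kappa i π hext]
    ext x
    exact ⟨fun h => Subtype.ext h, fun h => congrArg Subtype.val h⟩

lemma ss_S1 (hext : IsExtensionHom i π) (hss : IsSemiSplit π) : IsSemiSplit (sigmaHom π) := by
  obtain ⟨s, hs⟩ := hss
  refine ⟨⟨⟨⟨fun f => ⟨(f.1, s (f.1 0)), mem_mappingCone.mpr ⟨f.2 1 rfl, (hs (f.1 0)).symm⟩⟩,
    ?_⟩, ?_⟩, ?_⟩, ?_⟩
  · intro f g
    apply Subtype.ext; apply Prod.ext
    · rfl
    · show s ((f + g).1 0) = s (f.1 0) + s (g.1 0)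
      rw [show (f + g).1 0 = f.1 0 + g.1 0 from rfl, map_add]
  · intro c f
    apply Subtype.ext; apply Prod.ext
    · rfl
    · show s ((c • f).1 0) = c • s (f.1 0)
      rw [show (c • f).1 0 = c • f.1 0 from rfl, map_smul]
  · apply Continuous.subtype_mk
    apply Continuous.prodMk continuous_subtype_val
    exact s.continuous.comp ((continuous_eval_const 0).comp continuous_subtype_val)
  · intro f
    exact Subtype.ext rfl

/-- The map `q̂ : C_i → ΣA` (raw function). -/
def qhatFun (hext : IsExtensionHom i π) (x : (coneObj i).carrier) : (suspObj A).carrier :=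
  ⟨⟨fun t => π.1 (x.1.1 (unitInterval.symm t)),
      π.2.comp ((map_continuous x.1.1).comp unitInterval.continuous_symm)⟩, by
    rintro y (rfl | rfl)
    · show π.1 (x.1.1 (unitInterval.symm 0)) = 0
      rw [unitInterval.symm_zero, (mem_mappingCone.mp x.2).1, map_zero]
    · show π.1 (x.1.1 (unitInterval.symm 1)) = 0
      rw [unitInterval.symm_one, (mem_mappingCone.mp x.2).2]
      exact pi_i_zero i π hext _⟩

/-- The map `q̂ : C_i → ΣA`, `(g,b) ↦ (t ↦ π(g(1-t)))`. -/
def qhatHom (hext : IsExtensionHom i π) : coneObj i ⟶ suspObj A :=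
  ⟨{ toFun := qhatFun i π hext
     map_smul' := fun c x => Subtype.ext (by ext t; exact map_smul π.1 c _)
     map_zero' := Subtype.ext (by ext t; exact map_zero π.1)
     map_add' := fun x y => Subtype.ext (by ext t; exact map_add π.1 _ _)
     map_mul' := fun x y => Subtype.ext (by ext t; exact map_mul π.1 _ _) },
   by
    apply Continuous.subtype_mk
    apply ContinuousMap.continuous_of_continuous_uncurry
    show Continuous fun p : (coneObj i).carrier × unitInterval =>
      π.1 (p.1.1.1 (unitInterval.symm p.2))
    exact π.2.comp (contEval ((continuous_fst.comp continuous_subtype_val).comp continuous_fst)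
      (unitInterval.continuous_symm.comp continuous_snd))⟩

/-- The map `ĉ : CB → C_i` (raw function). -/
def chatFun (β : (coneAlgObj B).carrier) : (coneObj i).carrier :=
  ⟨((postcompHom i.1 i.2) β.1, β.1 0), mem_mappingCone.mpr ⟨by
      show i.1 (β.1 1) = 0
      rw [β.2 1 rfl, map_zero], rfl⟩⟩

/-- The map `ĉ : CB → C_i`, `β ↦ (i ∘ β, β(0))`. -/
def chatHom : coneAlgObj B ⟶ coneObj i :=
  ⟨{ toFun := chatFun i
     map_smul' := fun c β => Subtype.ext (Prod.ext (map_smul (postcompHom i.1 i.2) c β.1) rfl)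
     map_zero' := Subtype.ext (Prod.ext (map_zero (postcompHom i.1 i.2)) rfl)
     map_add' := fun β γ => Subtype.ext (Prod.ext (map_add (postcompHom i.1 i.2) β.1 γ.1) rfl)
     map_mul' := fun β γ => Subtype.ext (Prod.ext (map_mul (postcompHom i.1 i.2) β.1 γ.1) rfl) },
   by
    apply Continuous.subtype_mk
    exact (((ContinuousMap.continuous_postcomp _).comp continuous_subtype_val).prodMk
      ((continuous_eval_const 0).comp continuous_subtype_val))⟩

/-- Continuous lifting of paths with values in the range of `i`. -/
lemma lift_path (hext : IsExtensionHom i π) (g : C(unitInterval, D.carrier))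
    (hg : ∀ t, g t ∈ Set.range i.1) :
    ∃ β : C(unitInterval, B.carrier), ∀ t, i.1 (β t) = g t := by
  classical
  set iL : B.carrier →L[ℂ] D.carrier := ⟨⟨⟨⇑i.1, map_add i.1⟩, map_smul i.1⟩, i.2⟩ with hiL
  have hcoe : ⇑iL = ⇑i.1 := rfl
  set R : Submodule ℂ D.carrier := LinearMap.range iL.toLinearMap with hR
  have hco : (R : Set D.carrier) = Set.range i.1 := by
    rw [hR, LinearMap.coe_range, ContinuousLinearMap.coe_coe, hcoe]
  have hmem : ∀ t, g t ∈ R := fun t => by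
    obtain ⟨b, hb⟩ := hg t
    exact LinearMap.mem_range.mpr ⟨b, hb⟩
  have hcl : IsClosed (R : Set D.carrier) := by rw [hco]; exact hext.closedRange
  haveI : CompleteSpace R := hcl.completeSpace_coe
  set f : B.carrier →L[ℂ] R := iL.codRestrict R (fun b => LinearMap.mem_range_self _ b) with hf
  have hinj : Function.Injective f := by
    intro a b h
    apply hext.inj
    exact congrArg Subtype.val h
  have hsur : Function.Surjective f := by
    rintro ⟨y, hy⟩
    obtain ⟨b, hb⟩ := hy
    exact ⟨b, Subtype.ext hb⟩
  let e := ContinuousLinearEquiv.ofBijective f (LinearMap.ker_eq_bot.mpr hinj)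
    (LinearMap.range_eq_top.mpr hsur)
  have he : ∀ b, e b = f b := fun b => rfl
  refine ⟨⟨fun t => e.symm ⟨g t, hmem t⟩,
    e.symm.continuous.comp (Continuous.subtype_mk (map_continuous g) _)⟩, ?_⟩
  intro t
  have h1 : e (e.symm ⟨g t, hmem t⟩) = ⟨g t, hmem t⟩ := e.apply_symm_apply _
  rw [he] at h1
  exact congrArg Subtype.val h1

lemma range_chat (hext : IsExtensionHom i π) :
    Set.range (chatHom i).1 =
      {x : (coneObj i).carrier | ∀ t, π.1 (x.1.1 t) = 0} := by
  ext x; constructor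
  · rintro ⟨β, rfl⟩ t
    exact pi_i_zero i π hext _
  · intro hx
    have hg : ∀ t, x.1.1 t ∈ Set.range i.1 := fun t => by rw [hext.exact]; exact hx t
    obtain ⟨β, hβ⟩ := lift_path i π hext x.1.1 hg
    have hβ1 : β 1 = 0 := by
      apply hext.inj
      rw [hβ 1, (mem_mappingCone.mp x.2).1, map_zero]
    have hβ0 : β 0 = x.1.2 := by
      apply hext.inj
      rw [hβ 0]
      exact (mem_mappingCone.mp x.2).2
    refine ⟨⟨β, fun y hy => by rw [show y = 1 from hy]; exact hβ1⟩, ?_⟩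
    apply Subtype.ext; apply Prod.ext
    · ext t; exact hβ t
    · exact hβ0

/-- The semi-split linear section of `q̂` (raw function). -/
def qsecFun (s : A.carrier →L[ℂ] D.carrier) (hs : ∀ a, π.1 (s a) = a)
    (h : (suspObj A).carrier) : (coneObj i).carrier :=
  ⟨(⟨fun t => s (h.1 (unitInterval.symm t)),
      s.continuous.comp ((map_continuous h.1).comp unitInterval.continuous_symm)⟩, 0),
    mem_mappingCone.mpr ⟨by
      show s (h.1 (unitInterval.symm 1)) = 0
      rw [unitInterval.symm_one, susp_apply_zero h, map_zero], by
      show s (h.1 (unitInterval.symm 0)) = i.1 0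
      rw [unitInterval.symm_zero, susp_apply_one h, map_zero, map_zero]⟩⟩

lemma qhat_qsec (hext : IsExtensionHom i π) (s : A.carrier →L[ℂ] D.carrier)
    (hs : ∀ a, π.1 (s a) = a) (h : (suspObj A).carrier) :
    (qhatHom i π hext).1 (qsecFun i π s hs h) = h := by
  apply Subtype.ext; ext t
  show π.1 (s (h.1 (unitInterval.symm (unitInterval.symm t)))) = h.1 t
  rw [unitInterval.symm_symm, hs]

lemma ext_S2 (hext : IsExtensionHom i π) (hss : IsSemiSplit π) :
    IsExtensionHom (chatHom i) (qhatHom i π hext) := by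
  constructor
  · intro β γ h
    apply Subtype.ext; ext t
    apply hext.inj
    have h2 := congrArg (fun z : (coneObj i).carrier => z.1.1 t) h
    exact h2
  · rw [range_chat i π hext]
    have : {x : (coneObj i).carrier | ∀ t, π.1 (x.1.1 t) = 0} =
        ⋂ t, {x : (coneObj i).carrier | π.1 (x.1.1 t) = 0} := by
      ext x; simp [Set.mem_iInter]
    rw [this]
    exact isClosed_iInter fun t => isClosed_eq (π.2.comp
      ((continuous_eval_const t).comp
        (continuous_fst.comp continuous_subtype_val))) continuous_const
  · intro h
    obtain ⟨s, hs⟩ := hss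
    exact ⟨qsecFun i π s hs h, qhat_qsec i π hext s hs h⟩
  · rw [range_chat i π hext]
    ext x; constructor
    · intro hx
      apply Subtype.ext; ext t
      show π.1 (x.1.1 (unitInterval.symm t)) = 0
      exact hx _
    · intro hx t
      have h3 : π.1 (x.1.1 (unitInterval.symm (unitInterval.symm t))) = 0 :=
        congrArg (fun z : (suspObj A).carrier => z.1 (unitInterval.symm t)) hx
      rw [unitInterval.symm_symm] at h3
      exact h3

lemma ss_S2 (hext : IsExtensionHom i π) (hss : IsSemiSplit π) :
    IsSemiSplit (qhatHom i π hext) := by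
  obtain ⟨s, hs⟩ := hss
  refine ⟨⟨⟨⟨qsecFun i π s hs, ?_⟩, ?_⟩, ?_⟩, fun h => qhat_qsec i π hext s hs h⟩
  · intro h h'
    apply Subtype.ext; apply Prod.ext
    · ext t
      show s ((h + h').1 (unitInterval.symm t)) =
        s (h.1 (unitInterval.symm t)) + s (h'.1 (unitInterval.symm t))
      rw [show (h + h').1 (unitInterval.symm t)
        = h.1 (unitInterval.symm t) + h'.1 (unitInterval.symm t) from rfl, map_add]
    · exact (add_zero (0 : B.carrier)).symm
  · intro c h
    apply Subtype.ext; apply Prod.ext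
    · ext t
      show s ((c • h).1 (unitInterval.symm t)) = c • s (h.1 (unitInterval.symm t))
      rw [show (c • h).1 (unitInterval.symm t) = c • h.1 (unitInterval.symm t) from rfl, map_smul]
    · exact (smul_zero c).symm
  · apply Continuous.subtype_mk
    apply Continuous.prodMk _ continuous_const
    apply ContinuousMap.continuous_of_continuous_uncurry
    show Continuous fun p : (suspObj A).carrier × unitInterval =>
      s (p.1.1 (unitInterval.symm p.2))
    exact s.continuous.comp (contEval (continuous_subtype_val.comp continuous_fst)
      (unitInterval.continuous_symm.comp continuous_snd))

/-- The map `λ' : ΣD → C_i` (raw function). -/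
def lamFun (h : (suspObj D).carrier) : (coneObj i).carrier :=
  ⟨(⟨fun t => h.1 (unitInterval.symm t),
      (map_continuous h.1).comp unitInterval.continuous_symm⟩, 0),
    mem_mappingCone.mpr ⟨by
      show h.1 (unitInterval.symm 1) = 0
      rw [unitInterval.symm_one]; exact susp_apply_zero h, by
      show h.1 (unitInterval.symm 0) = i.1 0
      rw [unitInterval.symm_zero, susp_apply_one h, map_zero]⟩⟩

/-- The map `λ' : ΣD → C_i`, `h ↦ (h ∘ symm, 0)`. -/
def lamHom : suspObj D ⟶ coneObj i :=
  ⟨{ toFun := lamFun i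
     map_smul' := fun c h => Subtype.ext (Prod.ext (by ext t; rfl) (smul_zero _).symm)
     map_zero' := Subtype.ext (Prod.ext (by ext t; rfl) rfl)
     map_add' := fun h h' => Subtype.ext (Prod.ext (by ext t; rfl) (add_zero (0 : B.carrier)).symm)
     map_mul' := fun h h' => Subtype.ext (Prod.ext (by ext t; rfl) (mul_zero (0 : B.carrier)).symm)},
   by
    apply Continuous.subtype_mk
    apply Continuous.prodMk _ continuous_const
    apply ContinuousMap.continuous_of_continuous_uncurry
    show Continuous fun p : (suspObj D).carrier × unitInterval =>
      p.1.1 (unitInterval.symm p.2)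
    exact contEval (continuous_subtype_val.comp continuous_fst)
      (unitInterval.continuous_symm.comp continuous_snd)⟩

/-- The map `ξ : C_ι → ΣD` (raw function). -/
def xiFun (x : (coneObj (coneIotaHom π)).carrier) : (suspObj D).carrier :=
  ⟨⟨fun y => (x.1.1 (pI (2 * (y:ℝ)))).1.2, by
      apply (continuous_snd.comp continuous_subtype_val).comp
      exact (map_continuous x.1.1).comp (continuous_pI.comp (by fun_prop))⟩, by
    rintro y (rfl | rfl)
    · show (x.1.1 (pI (2 * ((0:unitInterval):ℝ)))).1.2 = 0
      rw [show (2 * ((0:unitInterval):ℝ)) = 0 by norm_num, pI_zero,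
        (mem_mappingCone.mp x.2).2]
      rfl
    · show (x.1.1 (pI (2 * ((1:unitInterval):ℝ)))).1.2 = 0
      rw [show (2 * ((1:unitInterval):ℝ)) = 2 by norm_num,
        pI_of_one_le (by norm_num), (mem_mappingCone.mp x.2).1]
      rfl⟩

/-- The map `ξ : C_ι → ΣD`. -/
def xiHom : coneObj (coneIotaHom π) ⟶ suspObj D :=
  ⟨{ toFun := xiFun π
     map_smul' := fun c x => Subtype.ext (by ext y; rfl)
     map_zero' := Subtype.ext (by ext y; rfl)
     map_add' := fun x y => Subtype.ext (by ext z; rfl)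
     map_mul' := fun x y => Subtype.ext (by ext z; rfl) },
   by
    apply Continuous.subtype_mk
    apply ContinuousMap.continuous_of_continuous_uncurry
    show Continuous fun p : (coneObj (coneIotaHom π)).carrier × unitInterval =>
      ((p.1.1.1 (pI (2 * (p.2:ℝ)))).1).2
    exact (continuous_snd.comp continuous_subtype_val).comp
      (contEval (show Continuous fun p : (coneObj (coneIotaHom π)).carrier × unitInterval => p.1.1.1
          from (continuous_fst.comp continuous_subtype_val).comp continuous_fst)
        (continuous_pI.comp (by fun_prop)))⟩

lemma kappa_eps (hext : IsExtensionHom i π) :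
    coneKappaHom i π hext ≫ coneEpsHom π = i :=
  Subtype.ext (NonUnitalAlgHom.ext fun b => rfl)

lemma lam_qhat (hext : IsExtensionHom i π) :
    lamHom i ≫ qhatHom i π hext = suspHom π := by
  apply Subtype.ext; apply NonUnitalAlgHom.ext; intro h
  apply Subtype.ext; ext t
  show π.1 (h.1 (unitInterval.symm (unitInterval.symm t))) = π.1 (h.1 t)
  rw [unitInterval.symm_symm]

lemma lam_ei_zero : ∀ h, (lamHom i ≫ coneEpsHom i).1 h = 0 := fun _ => rfl

end Statement15Specific

section Statement15Homotopies
open CategoryTheory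

variable {B D A : BanAlg} (i : B ⟶ D) (π : D ⟶ A)

lemma pI_symm (t : unitInterval) : pI (1 - (t:ℝ)) = unitInterval.symm t := by
  apply Subtype.ext
  rw [pI_val, unitInterval.coe_symm_eq, min_eq_right (by linarith [t.2.1]),
    max_eq_right (by linarith [t.2.2])]

/-- Element of the homotopy `Φ` between `κ ∘ ε_i` and `ι ∘ q̂`. -/
def phiElt (hext : IsExtensionHom i π) (x : (coneObj i).carrier) (s : unitInterval) :
    (coneObj π).carrier :=
  ⟨(⟨fun t => π.1 (x.1.1 (pI ((s:ℝ) * (1 - (t:ℝ))))),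
      π.2.comp ((map_continuous x.1.1).comp (continuous_pI.comp (by fun_prop)))⟩, x.1.1 s),
    mem_mappingCone.mpr ⟨by
      show π.1 (x.1.1 (pI ((s:ℝ) * (1 - ((1:unitInterval):ℝ))))) = 0
      rw [show ((s:ℝ) * (1 - ((1:unitInterval):ℝ))) = 0 by norm_num, pI_zero,
        (mem_mappingCone.mp x.2).2]
      exact pi_i_zero i π hext _, by
      show π.1 (x.1.1 (pI ((s:ℝ) * (1 - ((0:unitInterval):ℝ))))) = π.1 (x.1.1 s)
      rw [show ((s:ℝ) * (1 - ((0:unitInterval):ℝ))) = (s:ℝ) by norm_num, pI_coe]⟩⟩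

/-- The homotopy `Φ` as a function. -/
def phiFun (hext : IsExtensionHom i π) (x : (coneObj i).carrier) :
    C(unitInterval, (coneObj π).carrier) :=
  ⟨fun s => phiElt i π hext x s, by
    apply Continuous.subtype_mk
    apply Continuous.prodMk
    · apply ContinuousMap.continuous_of_continuous_uncurry
      show Continuous fun p : unitInterval × unitInterval =>
        π.1 (x.1.1 (pI ((p.1:ℝ) * (1 - (p.2:ℝ)))))
      exact π.2.comp ((map_continuous x.1.1).comp (continuous_pI.comp (by fun_prop)))
    · exact map_continuous x.1.1⟩

/-- The homotopy `Φ` as a continuous homomorphism. -/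
def phiMap (hext : IsExtensionHom i π) :
    (coneObj i).carrier →ₙₐ[ℂ] C(unitInterval, (coneObj π).carrier) where
  toFun := phiFun i π hext
  map_smul' c x := by
    ext s; apply Subtype.ext; apply Prod.ext
    · ext t; exact map_smul π.1 c _
    · rfl
  map_zero' := by
    ext s; apply Subtype.ext; apply Prod.ext
    · ext t; exact map_zero π.1
    · rfl
  map_add' x y := by
    ext s; apply Subtype.ext; apply Prod.ext
    · ext t; exact map_add π.1 _ _
    · rfl
  map_mul' x y := by
    ext s; apply Subtype.ext; apply Prod.ext
    · ext t; exact map_mul π.1 _ _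
    · rfl

lemma continuous_phiMap (hext : IsExtensionHom i π) : Continuous (phiMap i π hext) := by
  apply ContinuousMap.continuous_of_continuous_uncurry
  apply Continuous.subtype_mk
  apply Continuous.prodMk
  · apply ContinuousMap.continuous_of_continuous_uncurry
    show Continuous fun q : (((coneObj i).carrier) × unitInterval) × unitInterval =>
      π.1 (q.1.1.1.1 (pI ((q.1.2:ℝ) * (1 - (q.2:ℝ)))))
    exact π.2.comp (contEval
      (((continuous_fst.comp continuous_subtype_val).comp continuous_fst).comp continuous_fst)
      (continuous_pI.comp (by fun_prop)))
  · show Continuous fun p : ((coneObj i).carrier) × unitInterval => p.1.1.1 p.2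
    exact contEval ((continuous_fst.comp continuous_subtype_val).comp continuous_fst)
      continuous_snd

lemma phi_htp (hext : IsExtensionHom i π) :
    NAlgHomotopic ((coneKappaHom i π hext).1.comp (coneEpsHom i).1)
      ((coneIotaHom π).1.comp (qhatHom i π hext).1) := by
  refine ⟨phiMap i π hext, continuous_phiMap i π hext, ?_, ?_⟩
  · intro x
    apply Subtype.ext; apply Prod.ext
    · ext t
      show π.1 (x.1.1 (pI (((0:unitInterval):ℝ) * (1 - (t:ℝ))))) = 0
      rw [show (((0:unitInterval):ℝ) * (1 - (t:ℝ))) = 0 by norm_num, pI_zero,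
        (mem_mappingCone.mp x.2).2]
      exact pi_i_zero i π hext _
    · exact (mem_mappingCone.mp x.2).2
  · intro x
    apply Subtype.ext; apply Prod.ext
    · ext t
      show π.1 (x.1.1 (pI (((1:unitInterval):ℝ) * (1 - (t:ℝ))))) =
        π.1 (x.1.1 (unitInterval.symm t))
      rw [show (((1:unitInterval):ℝ) * (1 - (t:ℝ))) = 1 - (t:ℝ) by norm_num, pI_symm]
    · exact (mem_mappingCone.mp x.2).1

/-- Element of the homotopy `Θ` between `ε_ι` and `Σπ ∘ ξ`. -/
def thetaElt (x : (coneObj (coneIotaHom π)).carrier) (s : unitInterval) :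
    (suspObj A).carrier :=
  ⟨⟨fun y => (x.1.1 (pI ((s:ℝ) * min (2*(y:ℝ)) 1))).1.1
      (pI ((1-(s:ℝ))*(y:ℝ) + (s:ℝ) * max (2*(y:ℝ)-1) 0)), by
    apply contEval
    · exact (continuous_fst.comp continuous_subtype_val).comp
        ((map_continuous x.1.1).comp (continuous_pI.comp (by fun_prop)))
    · exact continuous_pI.comp (by fun_prop)⟩, by
    rintro y (rfl | rfl)
    · show (x.1.1 (pI ((s:ℝ) * min (2*((0:unitInterval):ℝ)) 1))).1.1
        (pI ((1-(s:ℝ))*((0:unitInterval):ℝ) + (s:ℝ) * max (2*((0:unitInterval):ℝ)-1) 0)) = 0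
      rw [show ((s:ℝ) * min (2*((0:unitInterval):ℝ)) 1) = 0 by norm_num, pI_zero,
        show ((1-(s:ℝ))*((0:unitInterval):ℝ) + (s:ℝ) * max (2*((0:unitInterval):ℝ)-1) 0) = 0 by
          norm_num, pI_zero, (mem_mappingCone.mp x.2).2]
      exact susp_apply_zero x.1.2
    · show (x.1.1 (pI ((s:ℝ) * min (2*((1:unitInterval):ℝ)) 1))).1.1
        (pI ((1-(s:ℝ))*((1:unitInterval):ℝ) + (s:ℝ) * max (2*((1:unitInterval):ℝ)-1) 0)) = 0
      rw [show ((s:ℝ) * min (2*((1:unitInterval):ℝ)) 1) = (s:ℝ) by norm_num, pI_coe,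
        show ((1-(s:ℝ))*((1:unitInterval):ℝ) + (s:ℝ) * max (2*((1:unitInterval):ℝ)-1) 0) = 1 by
          norm_num, pI_one]
      exact (mem_mappingCone.mp (x.1.1 s).2).1⟩

/-- The homotopy `Θ` as a function. -/
def thetaFun (x : (coneObj (coneIotaHom π)).carrier) :
    C(unitInterval, (suspObj A).carrier) :=
  ⟨fun s => thetaElt π x s, by
    apply Continuous.subtype_mk
    apply ContinuousMap.continuous_of_continuous_uncurry
    show Continuous fun p : unitInterval × unitInterval =>
      (x.1.1 (pI ((p.1:ℝ) * min (2*(p.2:ℝ)) 1))).1.1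
        (pI ((1-(p.1:ℝ))*(p.2:ℝ) + (p.1:ℝ) * max (2*(p.2:ℝ)-1) 0))
    apply contEval
    · exact (continuous_fst.comp continuous_subtype_val).comp
        ((map_continuous x.1.1).comp (continuous_pI.comp (by fun_prop)))
    · exact continuous_pI.comp (by fun_prop)⟩

/-- The homotopy `Θ` as a continuous homomorphism. -/
def thetaMap : (coneObj (coneIotaHom π)).carrier →ₙₐ[ℂ]
    C(unitInterval, (suspObj A).carrier) where
  toFun := thetaFun π
  map_smul' c x := by ext s; apply Subtype.ext; ext y; rfl
  map_zero' := by ext s; apply Subtype.ext; ext y; rfl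
  map_add' x y := by ext s; apply Subtype.ext; ext z; rfl
  map_mul' x y := by ext s; apply Subtype.ext; ext z; rfl

lemma continuous_thetaMap : Continuous (thetaMap π) := by
  apply ContinuousMap.continuous_of_continuous_uncurry
  apply Continuous.subtype_mk
  apply ContinuousMap.continuous_of_continuous_uncurry
  show Continuous fun q : (((coneObj (coneIotaHom π)).carrier) × unitInterval) × unitInterval =>
    (q.1.1.1.1 (pI ((q.1.2:ℝ) * min (2*(q.2:ℝ)) 1))).1.1
      (pI ((1-(q.1.2:ℝ))*(q.2:ℝ) + (q.1.2:ℝ) * max (2*(q.2:ℝ)-1) 0))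
  apply contEval
  · exact (continuous_fst.comp continuous_subtype_val).comp
      (contEval (show Continuous fun q : (((coneObj (coneIotaHom π)).carrier) × unitInterval) ×
          unitInterval => q.1.1.1.1 from ((continuous_fst.comp continuous_subtype_val).comp continuous_fst).comp
        continuous_fst) (continuous_pI.comp (by fun_prop)))
  · exact continuous_pI.comp (by fun_prop)

lemma theta_htp :
    NAlgHomotopic (coneEpsHom (coneIotaHom π)).1 ((suspHom π).1.comp (xiHom π).1) := by
  refine ⟨thetaMap π, continuous_thetaMap π, ?_, ?_⟩
  · intro x
    apply Subtype.ext; ext y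
    show (x.1.1 (pI (((0:unitInterval):ℝ) * min (2*(y:ℝ)) 1))).1.1
      (pI ((1-((0:unitInterval):ℝ))*(y:ℝ) + ((0:unitInterval):ℝ) * max (2*(y:ℝ)-1) 0))
      = x.1.2.1 y
    rw [show (((0:unitInterval):ℝ) * min (2*(y:ℝ)) 1) = 0 by norm_num, pI_zero,
      show ((1-((0:unitInterval):ℝ))*(y:ℝ) + ((0:unitInterval):ℝ) * max (2*(y:ℝ)-1) 0) = (y:ℝ) by
        norm_num, pI_coe, (mem_mappingCone.mp x.2).2]
    rfl
  · intro x
    apply Subtype.ext; ext y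
    show (x.1.1 (pI (((1:unitInterval):ℝ) * min (2*(y:ℝ)) 1))).1.1
      (pI ((1-((1:unitInterval):ℝ))*(y:ℝ) + ((1:unitInterval):ℝ) * max (2*(y:ℝ)-1) 0))
      = π.1 ((x.1.1 (pI (2*(y:ℝ)))).1.2)
    rw [show (((1:unitInterval):ℝ) * min (2*(y:ℝ)) 1) = min (2*(y:ℝ)) 1 by norm_num,
      show ((1-((1:unitInterval):ℝ))*(y:ℝ) + ((1:unitInterval):ℝ) * max (2*(y:ℝ)-1) 0)
        = max (2*(y:ℝ)-1) 0 by norm_num]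
    rcases le_total (2*(y:ℝ)) 1 with hy | hy
    · rw [min_eq_left hy, show max (2*(y:ℝ)-1) 0 = 0 from max_eq_right (by linarith), pI_zero]
      exact (mem_mappingCone.mp (x.1.1 (pI (2*(y:ℝ)))).2).2
    · rw [min_eq_right hy, pI_one, pI_of_one_le hy, (mem_mappingCone.mp x.2).1]
      show (0:A.carrier) = π.1 0
      rw [map_zero]

end Statement15Homotopies

section Statement15F
open CategoryTheory

variable {𝒞 : Type*} [Category 𝒞] [Preadditive 𝒞] (F : BanAlg ⥤ 𝒞)

lemma F_fromZero (hhe : HalfExactFunctor F) (Q : BanAlg) :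
    F.map (zeroMor zeroObj Q) = 0 := by
  have hex := (hhe zeroObj Q Q (zeroMor zeroObj Q) (𝟙 Q) (ext_zero Q)
    ⟨ContinuousLinearMap.id ℂ Q.carrier, fun a => rfl⟩ (F.obj zeroObj)).1
  have h2 := (hex (F.map (zeroMor zeroObj Q))).mpr ⟨𝟙 (F.obj zeroObj), Category.id_comp _⟩
  rw [F.map_id] at h2
  simpa using h2

lemma F_map_eq_zero (hhe : HalfExactFunctor F) {P Q : BanAlg} (z : P ⟶ Q)
    (hz : ∀ x, z.1 x = 0) : F.map z = 0 := by
  have hfac : z = zeroMor P zeroObj ≫ zeroMor zeroObj Q :=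
    Subtype.ext (NonUnitalAlgHom.ext fun x => by rw [hz x]; rfl)
  rw [hfac, F.map_comp, F_fromZero F hhe, Limits.comp_zero]

lemma F_id_zero (hhtp : HomotopyInvariant F) (hhe : HalfExactFunctor F) (P : BanAlg)
    (hcontr : NAlgHomotopic (idMor P).1 (zeroMor P P).1) : 𝟙 (F.obj P) = 0 := by
  have h1 := hhtp P P (idMor P) (zeroMor P P) hcontr
  rw [idMor_eq, F.map_id] at h1
  rw [h1]
  exact F_map_eq_zero F hhe (zeroMor P P) (fun _ => rfl)

lemma puppe_cov (hhe : HalfExactFunctor F) {P Q : BanAlg} (ρ : P ⟶ Q) {X : 𝒞}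
    (u : X ⟶ F.obj P) (hu : u ≫ F.map ρ = 0) :
    ∃ t : X ⟶ F.obj (coneObj ρ), u = t ≫ F.map (coneEpsHom ρ) := by
  have hex := (hhe _ _ _ (cylIncl ρ) (cylEv ρ) (ext_cyl ρ) (ss_cyl ρ) X).1
  have h5 : (u ≫ F.map (cylIn ρ)) ≫ F.map (cylEv ρ) = 0 := by
    rw [Category.assoc, ← F.map_comp, cylIn_ev, hu]
  obtain ⟨t, ht⟩ := (hex _).mp h5
  have ht2 : t ≫ F.map (cylIncl ρ) = u ≫ F.map (cylIn ρ) := ht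
  refine ⟨t, ?_⟩
  have h6 : u ≫ F.map (cylIn ρ) ≫ F.map (cylPr ρ) = u := by
    rw [← F.map_comp, cylIn_pr, F.map_id, Category.comp_id]
  calc u = u ≫ F.map (cylIn ρ) ≫ F.map (cylPr ρ) := h6.symm
    _ = (u ≫ F.map (cylIn ρ)) ≫ F.map (cylPr ρ) := by rw [Category.assoc]
    _ = (t ≫ F.map (cylIncl ρ)) ≫ F.map (cylPr ρ) := by rw [← ht2]
    _ = t ≫ F.map (cylIncl ρ) ≫ F.map (cylPr ρ) := by rw [Category.assoc]
    _ = t ≫ F.map (cylIncl ρ ≫ cylPr ρ) := by rw [F.map_comp]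
    _ = t ≫ F.map (coneEpsHom ρ) := by rw [cylIncl_pr]

variable {B D A : BanAlg} (i : B ⟶ D) (π : D ⟶ A) (hext : IsExtensionHom i π)

lemma mono_qhat (hhtp : HomotopyInvariant F) (hhe : HalfExactFunctor F)
    (hss : IsSemiSplit π) {X : 𝒞} (u : X ⟶ F.obj (coneObj i))
    (hu : u ≫ F.map (qhatHom i π hext) = 0) : u = 0 := by
  have hex := (hhe _ _ _ (chatHom i) (qhatHom i π hext) (ext_S2 i π hext hss)
    (ss_S2 i π hext hss) X).1
  obtain ⟨t, ht⟩ := (hex u).mp hu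
  have ht2 : t ≫ F.map (chatHom i) = u := ht
  have h0 : F.map (chatHom i) = 0 := by
    have h1 : 𝟙 (F.obj (coneAlgObj B)) = 0 := F_id_zero F hhtp hhe _ (coneAlg_contr B)
    calc F.map (chatHom i) = 𝟙 (F.obj (coneAlgObj B)) ≫ F.map (chatHom i) :=
        (Category.id_comp _).symm
      _ = 0 := by rw [h1, Limits.zero_comp]
  rw [← ht2, h0, Limits.comp_zero]

lemma split_epi_kappa (hhtp : HomotopyInvariant F) (hhe : HalfExactFunctor F)
    (hss : IsSemiSplit π) :
    ∃ w : F.obj (coneObj π) ⟶ F.obj B,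
      w ≫ F.map (coneKappaHom i π hext) = 𝟙 (F.obj (coneObj π)) := by
  have hσ : F.map (sigmaHom π) = 0 := by
    have h1 : 𝟙 (F.obj (coneAlgObj A)) = 0 := F_id_zero F hhtp hhe _ (coneAlg_contr A)
    calc F.map (sigmaHom π) = F.map (sigmaHom π) ≫ 𝟙 (F.obj (coneAlgObj A)) :=
        (Category.comp_id _).symm
      _ = 0 := by rw [h1, Limits.comp_zero]
  have hex := (hhe _ _ _ (coneKappaHom i π hext) (sigmaHom π) (ext_S1 i π hext)
    (ss_S1 i π hext hss) (F.obj (coneObj π))).1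
  apply (hex (𝟙 (F.obj (coneObj π)))).mp
  show 𝟙 (F.obj (coneObj π)) ≫ F.map (sigmaHom π) = 0
  rw [hσ, Limits.comp_zero]

lemma mono_kappa (hhtp : HomotopyInvariant F) (hhe : HalfExactFunctor F)
    (hss : IsSemiSplit π) {X : 𝒞} (u : X ⟶ F.obj B)
    (hu : u ≫ F.map (coneKappaHom i π hext) = 0) : u = 0 := by
  have hi : u ≫ F.map i = 0 := by
    rw [← kappa_eps i π hext, F.map_comp, ← Category.assoc, hu, Limits.zero_comp]
  obtain ⟨v, hv⟩ := puppe_cov F hhe i u hi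
  have hphi : F.map (coneEpsHom i ≫ coneKappaHom i π hext)
      = F.map (qhatHom i π hext ≫ coneIotaHom π) :=
    hhtp _ _ (coneEpsHom i ≫ coneKappaHom i π hext)
      (qhatHom i π hext ≫ coneIotaHom π) (phi_htp i π hext)
  have h2 : (v ≫ F.map (qhatHom i π hext)) ≫ F.map (coneIotaHom π) = 0 := by
    calc (v ≫ F.map (qhatHom i π hext)) ≫ F.map (coneIotaHom π)
        = v ≫ F.map (qhatHom i π hext ≫ coneIotaHom π) := by
          rw [Category.assoc, F.map_comp]
      _ = v ≫ F.map (coneEpsHom i ≫ coneKappaHom i π hext) := by rw [hphi]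
      _ = (v ≫ F.map (coneEpsHom i)) ≫ F.map (coneKappaHom i π hext) := by
          rw [F.map_comp, Category.assoc]
      _ = u ≫ F.map (coneKappaHom i π hext) := by rw [← hv]
      _ = 0 := hu
  obtain ⟨c, hc⟩ := puppe_cov F hhe (coneIotaHom π) _ h2
  have htheta : F.map (coneEpsHom (coneIotaHom π)) = F.map (xiHom π ≫ suspHom π) :=
    hhtp _ _ (coneEpsHom (coneIotaHom π)) (xiHom π ≫ suspHom π) (theta_htp π)
  have h3 : v ≫ F.map (qhatHom i π hext)
      = (c ≫ F.map (xiHom π) ≫ F.map (lamHom i)) ≫ F.map (qhatHom i π hext) := by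
    calc v ≫ F.map (qhatHom i π hext)
        = c ≫ F.map (coneEpsHom (coneIotaHom π)) := hc
      _ = c ≫ F.map (xiHom π ≫ suspHom π) := by rw [htheta]
      _ = c ≫ F.map (xiHom π ≫ lamHom i ≫ qhatHom i π hext) := by
          rw [lam_qhat i π hext]
      _ = (c ≫ F.map (xiHom π) ≫ F.map (lamHom i)) ≫ F.map (qhatHom i π hext) := by
          rw [F.map_comp, F.map_comp]
          simp only [Category.assoc]
  have h4 : v = c ≫ F.map (xiHom π) ≫ F.map (lamHom i) := by
    have hsub : (v - (c ≫ F.map (xiHom π) ≫ F.map (lamHom i)))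
        ≫ F.map (qhatHom i π hext) = 0 := by
      rw [Preadditive.sub_comp, ← h3, sub_self]
    exact sub_eq_zero.mp (mono_qhat F i π hext hhtp hhe hss _ hsub)
  have hlame : F.map (lamHom i ≫ coneEpsHom i) = 0 :=
    F_map_eq_zero F hhe (lamHom i ≫ coneEpsHom i) (lam_ei_zero i)
  calc u = v ≫ F.map (coneEpsHom i) := hv
    _ = (c ≫ F.map (xiHom π) ≫ F.map (lamHom i)) ≫ F.map (coneEpsHom i) := by rw [h4]
    _ = c ≫ F.map (xiHom π) ≫ F.map (lamHom i) ≫ F.map (coneEpsHom i) := by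
        simp only [Category.assoc]
    _ = c ≫ F.map (xiHom π) ≫ F.map (lamHom i ≫ coneEpsHom i) := by rw [F.map_comp]
    _ = 0 := by rw [hlame, Limits.comp_zero, Limits.comp_zero]

lemma kappa_iso_main (hhtp : HomotopyInvariant F) (hhe : HalfExactFunctor F)
    (hss : IsSemiSplit π) : IsIso (F.map (coneKappaHom i π hext)) := by
  obtain ⟨w, hw⟩ := split_epi_kappa F i π hext hhtp hhe hss
  have h5 : F.map (coneKappaHom i π hext) ≫ w = 𝟙 (F.obj B) := by
    have h6 : (F.map (coneKappaHom i π hext) ≫ w - 𝟙 (F.obj B))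
        ≫ F.map (coneKappaHom i π hext) = 0 := by
      rw [Preadditive.sub_comp, Category.assoc, hw, Category.comp_id,
        Category.id_comp, sub_self]
    exact sub_eq_zero.mp (mono_kappa F i π hext hhtp hhe hss _ h6)
  exact ⟨w, h5, hw⟩

end Statement15F
/-!
STATEMENT 15.  Let `F` be a functor from the category `BanAlg` of Banach algebras and
continuous homomorphisms into an additive category which is homotopy invariant and
half-exact for semi-split extensions.  Then for every semi-split extension `B ↣ D ↠ A`
the homomorphism `κ_π : B → C_π`, `b ↦ (0, i(b))`, into the mapping cone of `π` induces
an isomorphism `F(B) ≅ F(C_π)`.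
-/
theorem kappa_iso_of_halfexact_homotopyInvariant
    {𝒞 : Type*} [Category 𝒞] [Preadditive 𝒞] [Limits.HasBinaryBiproducts 𝒞]
    (F : BanAlg ⥤ 𝒞)
    (hhtp : HomotopyInvariant F) (hhe : HalfExactFunctor F)
    (B D A : BanAlg) (i : B ⟶ D) (π : D ⟶ A)
    (hext : IsExtensionHom i π) (hss : IsSemiSplit π) :
    IsIso (F.map (coneKappaHom i π hext)) := by
  exact kappa_iso_main F i π hext hhtp hhe hss
end
end
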